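/- arXiv:2010.07682 — 12 statements merged into one kernel-verified Lean document; each statement's English description precedes it below -/
import Mathlib

section
/- Zolotarev's lemma: Let k be a finite field of odd cardinality q and let a be a nonzero element of k. Then the sign of the permutation of k given by x ↦ a·x, viewed as an integer ±1 and then cast into k, equals a^((q−1)/2). Equivalently, this permutation is even if and only if a is a square in k. -/
open Equiv Equiv.Perm

/-- Zolotarev's lemma: for a finite field `k` of odd cardinality `q` and a
nonzero `a : k`, the sign of the permutation `x ↦ a * x` of `k`, cast into `k`, equals
`a ^ ((q - 1) / 2)`; equivalently, this permutation is even iff `a` is a square. -/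
theorem zolotarev {k : Type*} [Field k] [Fintype k] [DecidableEq k]
    (hodd : Odd (Fintype.card k)) (a : k) (ha : a ≠ 0) :
    ((Equiv.Perm.sign (Equiv.mulLeft₀ a ha) : ℤ) : k) = a ^ ((Fintype.card k - 1) / 2) ∧
      (Equiv.Perm.sign (Equiv.mulLeft₀ a ha) = 1 ↔ IsSquare a) := by
  set q := Fintype.card k with hq
  have hq3 : 3 ≤ q := by
    have h2 : 2 ≤ q := Fintype.one_lt_card
    rcases hodd with ⟨m, hm⟩
    omega
  obtain ⟨t, ht⟩ := id hodd
  have hchar : ringChar k ≠ 2 := by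
    intro h
    have := (FiniteField.even_card_iff_char_two (F := k)).mp h
    omega
  have hneg1 : (-1 : k) ≠ 1 := Ring.neg_one_ne_one_of_char_ne_two hchar
  set m := (q - 1) / 2 with hm
  have h2m : 2 * m = q - 1 := by omega
  have hcardu : Fintype.card kˣ = q - 1 := by rw [Fintype.card_units]
  -- generator
  obtain ⟨g, hg⟩ := IsCyclic.exists_generator (α := kˣ)
  have hog : orderOf g = q - 1 := by
    have := orderOf_eq_card_of_forall_mem_zpowers hg
    rw [Nat.card_eq_fintype_card] at this
    rw [this, hcardu]
  have hgq : g ^ (q - 1) = 1 := by rw [← hcardu]; exact pow_card_eq_one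
  -- g ^ m = -1
  have hgm : ((g ^ m : kˣ) : k) = -1 := by
    have hsq : ((g ^ m : kˣ) : k) * ((g ^ m : kˣ) : k) = 1 := by
      rw [← Units.val_mul, ← pow_add]
      have : m + m = q - 1 := by omega
      rw [this, hgq, Units.val_one]
    rcases mul_self_eq_one_iff.mp hsq with h1 | h1
    · exfalso
      have : g ^ m = 1 := Units.ext (by simpa using h1)
      have hdvd : orderOf g ∣ m := orderOf_dvd_of_pow_eq_one this
      rw [hog] at hdvd
      have hmpos : 0 < m := by omega
      have := Nat.le_of_dvd hmpos hdvd
      omega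
    · exact h1
  have hg1 : (g : k) ≠ 1 := by
    intro h
    have : g = 1 := Units.ext (by simpa using h)
    rw [this, one_pow, Units.val_one] at hgm
    exact hneg1 hgm.symm
  -- the sign homomorphism
  set φ : kˣ →* ℤˣ := Equiv.Perm.sign.comp (MulAction.toPermHom kˣ k) with hφ
  have hperm : ∀ (b : k) (hb : b ≠ 0),
      MulAction.toPermHom kˣ k (Units.mk0 b hb) = Equiv.mulLeft₀ b hb := by
    intro b hb; ext x; simp [Units.smul_def]
  -- σ = toPerm g is a cycle with support kˣ
  set σ : Equiv.Perm k := MulAction.toPermHom kˣ k g with hσ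
  have hσx : ∀ x : k, σ x = (g : k) * x := fun x => rfl
  have hfix : ∀ x : k, σ x = x ↔ x = 0 := by
    intro x
    rw [hσx]
    constructor
    · intro h
      by_contra hx
      exact hg1 (mul_right_cancel₀ hx (by rw [h, one_mul]))
    · intro h; rw [h, mul_zero]
  have hcyc : σ.IsCycle := by
    refine ⟨1, ?_, ?_⟩
    · intro h; exact one_ne_zero ((hfix 1).mp h)
    · intro y hy
      have hy0 : y ≠ 0 := fun h => hy (by rw [h]; exact (hfix 0).mpr rfl)
      obtain ⟨i, hi⟩ := hg (Units.mk0 y hy0)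
      have hi' : g ^ i = Units.mk0 y hy0 := hi
      refine ⟨i, ?_⟩
      have : σ ^ i = MulAction.toPermHom kˣ k (g ^ i) := (map_zpow _ _ _).symm
      rw [this]
      show ((g ^ i : kˣ) : k) * 1 = y
      rw [mul_one, hi']
      rfl
  have hsupp : σ.support = {(0 : k)}ᶜ := by
    ext x
    simp only [Equiv.Perm.mem_support, Finset.mem_compl, Finset.mem_singleton]
    exact not_congr (hfix x)
  have hsuppcard : σ.support.card = q - 1 := by
    rw [hsupp, Finset.card_compl, Finset.card_singleton, hq]
  have hsign_g : φ g = -1 := by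
    have := hcyc.sign
    rw [hsuppcard] at this
    have heven : Even (q - 1) := by
      refine ⟨m, by omega⟩
    simp only [hφ, MonoidHom.comp_apply]
    rw [← hσ, this, heven.neg_one_pow]
  -- write the unit of a as g ^ n
  set u : kˣ := Units.mk0 a ha with hu
  obtain ⟨n, hn⟩ := (mem_powers_iff_mem_zpowers).mpr (hg u)
  have hsign_u : Equiv.Perm.sign (Equiv.mulLeft₀ a ha) = (-1 : ℤˣ) ^ n := by
    rw [← hperm a ha, ← hu]
    show φ u = (-1) ^ n
    have hn' : g ^ n = u := hn
    rw [← hn', map_pow, hsign_g]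
  have hpow : a ^ m = (-1 : k) ^ n := by
    have hn' : g ^ n = u := hn
    have : a = ((g ^ n : kˣ) : k) := by rw [hn']; rfl
    rw [this, ← Units.val_pow_eq_pow_val, ← pow_mul, mul_comm n m, pow_mul,
      Units.val_pow_eq_pow_val, hgm]
  constructor
  · rw [hsign_u, hpow]
    push_cast
    ring
  · rw [hsign_u, FiniteField.isSquare_iff hchar ha]
    have hqdiv : q / 2 = m := by omega
    rw [hqdiv, hpow]
    constructor
    · intro h
      have hevenn : Even n := by
        by_contra hodd'
        rw [(Nat.not_even_iff_odd.mp hodd').neg_one_pow] at h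
        exact absurd h (by decide)
      rw [hevenn.neg_one_pow]
    · intro h
      have hevenn : Even n := by
        by_contra hodd'
        rw [(Nat.not_even_iff_odd.mp hodd').neg_one_pow] at h
        exact hneg1 h
      rw [hevenn.neg_one_pow]
end

section
/- Let k be a finite field of odd cardinality q, let r ≥ 1, and let M be an invertible r × r matrix over k. Then the sign of the permutation of k^r given by v ↦ M·v, viewed as an integer ±1 and then cast into k, equals (det M)^((q−1)/2). -/
open Equiv Equiv.Perm Matrix Finset

section aux
variable {k : Type*} [Field k] [Fintype k] [DecidableEq k]

private lemma units_pow_odd_eq_one (s : ℤˣ) {n : ℕ} (hn : Odd n) (h : s ^ n = 1) : s = 1 := by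
  rcases Int.units_eq_one_or s with rfl | rfl
  · rfl
  · rw [hn.neg_one_pow] at h; exact absurd h (by decide)

private lemma units_odd_pow_self (s : ℤˣ) {n : ℕ} (hn : Odd n) : s ^ n = s := by
  rcases Int.units_eq_one_or s with rfl | rfl
  · simp
  · exact hn.neg_one_pow

/-- Zolotarev: sign of left multiplication by a unit on `kˣ`. -/
private lemma cast_sign_units_mulLeft (hodd : Odd (Fintype.card k)) (u : kˣ) :
    (((Equiv.Perm.sign (Equiv.mulLeft u : Equiv.Perm kˣ)) : ℤ) : k)
      = (u : k) ^ ((Fintype.card k - 1) / 2) := by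
  have h2 : 2 ≤ Fintype.card k := Fintype.one_lt_card
  have h3 : 3 ≤ Fintype.card k := by
    rcases hodd with ⟨t, ht⟩; omega
  have heven : Even (Fintype.card k - 1) := Nat.Odd.sub_odd hodd odd_one
  have hcardu : Fintype.card kˣ = Fintype.card k - 1 := Fintype.card_units (α := k)
  obtain ⟨g, hg⟩ := IsCyclic.exists_generator (α := kˣ)
  have hog : orderOf g = Fintype.card k - 1 := by
    rw [orderOf_eq_card_of_forall_mem_zpowers hg, Nat.card_eq_fintype_card, hcardu]
  have hg1 : g ≠ 1 := by
    intro h; rw [h, orderOf_one] at hog; omega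
  set σ := (Equiv.mulLeft g : Equiv.Perm kˣ) with hσdef
  have hσapp : ∀ x : kˣ, σ x = g * x := fun x => rfl
  have hmove : ∀ y : kˣ, σ y ≠ y := by
    intro y h
    rw [hσapp, mul_eq_right] at h
    exact hg1 h
  have hcyc : σ.IsCycle := by
    refine ⟨1, hmove 1, fun y _ => ?_⟩
    obtain ⟨n, hn⟩ := Subgroup.mem_zpowers_iff.mp (hg y)
    refine ⟨n, ?_⟩
    rw [hσdef, Equiv.zpow_mulLeft]
    simp [hn]
  have hsupp : σ.support = Finset.univ :=
    Finset.eq_univ_iff_forall.mpr fun y => Equiv.Perm.mem_support.mpr (hmove y)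
  have hsign : Equiv.Perm.sign σ = -1 := by
    rw [hcyc.sign, hsupp, Finset.card_univ, hcardu, heven.neg_one_pow]
  set m := (Fintype.card k - 1) / 2 with hm
  have hm2 : m * 2 = Fintype.card k - 1 := Nat.div_mul_cancel heven.two_dvd
  have hmpos : 1 ≤ m := by omega
  have hmlt : m < Fintype.card k - 1 := by omega
  -- (g : k) ^ m = -1
  have hgm : (g : k) ^ m = -1 := by
    have hsq : ((g : k) ^ m) ^ 2 = 1 := by
      rw [← pow_mul, hm2, ← hog, ← Units.val_pow_eq_pow_val, pow_orderOf_eq_one g,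
        Units.val_one]
    have hne : (g : k) ^ m ≠ 1 := by
      have := pow_ne_one_of_lt_orderOf (x := g) (by omega : m ≠ 0) (by omega)
      intro h
      exact this (Units.ext (by rw [Units.val_pow_eq_pow_val, h, Units.val_one]))
    rcases sq_eq_one_iff.mp hsq with h | h
    · exact absurd h hne
    · exact h
  -- express u as a power of g
  have hfin : IsOfFinOrder g := isOfFinOrder_of_finite g
  obtain ⟨n, hn⟩ := Submonoid.mem_powers_iff _ _ |>.mp
    (hfin.mem_powers_iff_mem_zpowers.mpr (hg u))
  subst hn
  rw [← Equiv.pow_mulLeft, map_pow, hsign]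
  have e1 : ((((-1 : ℤˣ) ^ n : ℤˣ) : ℤ) : k) = (-1 : k) ^ n := by push_cast; ring
  have e2 : ((g ^ n : kˣ) : k) = (g : k) ^ n := by push_cast; ring
  rw [e1, e2, ← pow_mul, mul_comm n m, pow_mul, hgm]
end aux

section aux2
variable {k : Type*} [Field k] [Fintype k] [DecidableEq k]

/-- sign of the permutation `x ↦ d * x` of `k`. -/
private lemma cast_sign_mulPerm (hodd : Odd (Fintype.card k)) {d : k} (hd : d ≠ 0)
    (τ : Equiv.Perm k) (hτ : ∀ x, τ x = d * x) :
    ((Equiv.Perm.sign τ : ℤ) : k) = d ^ ((Fintype.card k - 1) / 2) := by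
  have hext : τ = Equiv.Perm.extendDomain (p := fun a : k => a ≠ 0)
      (Equiv.mulLeft (Units.mk0 d hd)) (unitsEquivNeZero (G₀ := k)) := by
    apply Equiv.ext
    intro x
    by_cases hx : x = 0
    · subst hx
      rw [Equiv.Perm.extendDomain_apply_not_subtype (Equiv.mulLeft (Units.mk0 d hd))
        (unitsEquivNeZero (G₀ := k)) (by simp), hτ, mul_zero]
    · rw [Equiv.Perm.extendDomain_apply_subtype (Equiv.mulLeft (Units.mk0 d hd))
        (unitsEquivNeZero (G₀ := k)) hx, hτ]
      simp
  rw [hext, Equiv.Perm.sign_extendDomain]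
  exact cast_sign_units_mulLeft hodd (Units.mk0 d hd)

private noncomputable def mulVecPerm {n : Type*} [Fintype n] [DecidableEq n] (M : Matrix n n k)
    (h : IsUnit M.det) : Equiv.Perm (n → k) where
  toFun := M.mulVec
  invFun := M⁻¹.mulVec
  left_inv v := by
    show M⁻¹ *ᵥ (M *ᵥ v) = v
    rw [Matrix.mulVec_mulVec, Matrix.nonsing_inv_mul M h, Matrix.one_mulVec]
  right_inv v := by
    show M *ᵥ (M⁻¹ *ᵥ v) = v
    rw [Matrix.mulVec_mulVec, Matrix.mul_nonsing_inv M h, Matrix.one_mulVec]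

@[simp] private lemma mulVecPerm_apply {n : Type*} [Fintype n] [DecidableEq n]
    (M : Matrix n n k) (h : IsUnit M.det) (v : n → k) : mulVecPerm M h v = M.mulVec v := rfl

/-- sign of the permutation induced by a diagonal matrix with a single non-1 entry. -/
private lemma cast_sign_single_diag {n : Type*} [Fintype n] [DecidableEq n]
    (hodd : Odd (Fintype.card k)) (a : n) {d : k} (hd : d ≠ 0)
    (σ : Equiv.Perm (n → k))
    (hσ : ∀ v, σ v = (Matrix.diagonal (Function.update (1 : n → k) a d)).mulVec v) :
    ((Equiv.Perm.sign σ : ℤ) : k) = d ^ ((Fintype.card k - 1) / 2) := by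
  set μ : Equiv.Perm k := Equiv.mulLeft₀ d hd with hμdef
  have hμ : ∀ x, μ x = d * x := fun x => rfl
  have hsign : Equiv.Perm.sign σ
      = Equiv.Perm.sign (Equiv.prodCongrLeft (fun _ : ({ j // j ≠ a } → k) => μ)) := by
    apply Equiv.Perm.sign_eq_sign_of_equiv σ _ (Equiv.funSplitAt a k)
    intro v
    have h1 : ∀ i, σ v i = Function.update (1 : n → k) a d i * v i := by
      intro i; rw [hσ, Matrix.mulVec_diagonal]
    refine Prod.ext ?_ ?_
    · show σ v a = μ (v a)
      rw [h1 a, hμ, Function.update_self]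
    · show (fun j : { j // j ≠ a } => σ v j) = fun j : { j // j ≠ a } => v j
      funext j
      rw [h1 j, Function.update_of_ne j.2, Pi.one_apply, one_mul]
  rw [hsign, Equiv.Perm.sign_prodCongrLeft, Finset.prod_const, Finset.card_univ,
    units_odd_pow_self _ (by
      rw [Fintype.card_fun]
      exact hodd.pow)]
  exact cast_sign_mulPerm hodd hd μ hμ

/-- sign of the permutation induced by an invertible diagonal matrix. -/
private lemma cast_sign_diag {n : Type*} [Fintype n] [DecidableEq n]
    (hodd : Odd (Fintype.card k)) (D : n → k) (hD : ∀ i, D i ≠ 0)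
    (σ : Equiv.Perm (n → k)) (hσ : ∀ v, σ v = (Matrix.diagonal D).mulVec v) :
    ((Equiv.Perm.sign σ : ℤ) : k) = ∏ i, D i ^ ((Fintype.card k - 1) / 2) := by
  have main : ∀ s : Finset n, ∀ D : n → k, (∀ i, D i ≠ 0) → (∀ i ∉ s, D i = 1) →
      ∀ σ : Equiv.Perm (n → k), (∀ v, σ v = (Matrix.diagonal D).mulVec v) →
      ((Equiv.Perm.sign σ : ℤ) : k) = ∏ i, D i ^ ((Fintype.card k - 1) / 2) := by
    intro s
    induction s using Finset.induction_on with
    | empty =>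
      intro D hD hsupp σ hσ
      have hD1 : D = fun _ => 1 := funext fun i => hsupp i (Finset.notMem_empty i)
      have hσ1 : σ = 1 := by
        apply Equiv.ext
        intro v
        rw [hσ, hD1]
        show (1 : Matrix n n k) *ᵥ v = v
        rw [Matrix.one_mulVec]
      rw [hσ1]
      simp [hD1]
    | @insert a s ha IH =>
      intro D hD hsupp σ hσ
      set D' := Function.update D a 1 with hD'def
      have hD'0 : ∀ i, D' i ≠ 0 := by
        intro i
        by_cases hi : i = a
        · subst hi; rw [hD'def, Function.update_self]; exact one_ne_zero
        · rw [hD'def, Function.update_of_ne hi]; exact hD i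
      have hD'supp : ∀ i ∉ s, D' i = 1 := by
        intro i hi
        by_cases hia : i = a
        · subst hia; rw [hD'def, Function.update_self]
        · rw [hD'def, Function.update_of_ne hia]
          exact hsupp i (by simp [hia, hi])
      set E := Function.update (1 : n → k) a (D a) with hEdef
      have hfun : (fun i => E i * D' i) = D := by
        funext i
        by_cases hi : i = a
        · subst hi
          rw [hEdef, hD'def, Function.update_self, Function.update_self, mul_one]
        · rw [hEdef, hD'def, Function.update_of_ne hi, Function.update_of_ne hi,
            Pi.one_apply, one_mul]
      have hmat : Matrix.diagonal E * Matrix.diagonal D' = Matrix.diagonal D := by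
        rw [Matrix.diagonal_mul_diagonal, hfun]
      have huD' : IsUnit (Matrix.diagonal D').det := by
        rw [Matrix.det_diagonal]
        exact (Finset.prod_ne_zero_iff.mpr fun i _ => hD'0 i).isUnit
      have huE : IsUnit (Matrix.diagonal E).det := by
        rw [Matrix.det_diagonal]
        refine (Finset.prod_ne_zero_iff.mpr fun i _ => ?_).isUnit
        by_cases hi : i = a
        · rw [hi, hEdef, Function.update_self]; exact hD a
        · rw [hEdef, Function.update_of_ne hi]; exact one_ne_zero
      have hdecomp : σ = mulVecPerm _ huE * mulVecPerm _ huD' := by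
        apply Equiv.ext
        intro v
        rw [hσ, Equiv.Perm.mul_apply, mulVecPerm_apply, mulVecPerm_apply,
          Matrix.mulVec_mulVec, hmat]
      have IH' := IH D' hD'0 hD'supp (mulVecPerm _ huD') (fun v => rfl)
      have hE' := cast_sign_single_diag hodd a (hD a) (mulVecPerm _ huE) (fun v => rfl)
      rw [hdecomp, _root_.map_mul]
      push_cast
      rw [IH', hE']
      have hupd : (fun i => D' i ^ ((Fintype.card k - 1) / 2))
          = Function.update (fun i => D i ^ ((Fintype.card k - 1) / 2)) a 1 := by
        funext i
        by_cases hi : i = a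
        · subst hi; simp [hD'def]
        · simp [hD'def, Function.update_of_ne hi]
      calc D a ^ ((Fintype.card k - 1) / 2) * ∏ i, D' i ^ ((Fintype.card k - 1) / 2)
          = D a ^ ((Fintype.card k - 1) / 2)
            * ∏ i ∈ Finset.univ.erase a, D i ^ ((Fintype.card k - 1) / 2) := by
            rw [hupd, Finset.prod_update_of_mem (Finset.mem_univ a), one_mul,
              Finset.sdiff_singleton_eq_erase]
        _ = ∏ i, D i ^ ((Fintype.card k - 1) / 2) :=
            Finset.mul_prod_erase Finset.univ
              (fun i => D i ^ ((Fintype.card k - 1) / 2)) (Finset.mem_univ a)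
  exact main Finset.univ D hD (fun i hi => absurd (Finset.mem_univ i) hi) σ hσ

private lemma key {n : Type*} [Fintype n] [DecidableEq n] (hodd : Odd (Fintype.card k))
    (M : Matrix n n k) (hdet : M.det ≠ 0) :
    ∀ σ : Equiv.Perm (n → k), (∀ v, σ v = M.mulVec v) →
      ((Equiv.Perm.sign σ : ℤ) : k) = M.det ^ ((Fintype.card k - 1) / 2) := by
  apply Matrix.diagonal_transvection_induction_of_det_ne_zero _ M hdet
  · intro D hDdet σ hσ
    have hD : ∀ i, D i ≠ 0 := by
      intro i hi
      exact hDdet (by rw [Matrix.det_diagonal]; exact Finset.prod_eq_zero (Finset.mem_univ i) hi)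
    rw [Matrix.det_diagonal, ← Finset.prod_pow]
    exact cast_sign_diag hodd D hD σ hσ
  · intro t σ hσ
    have hpow : ∀ p : ℕ, Matrix.transvection t.i t.j t.c ^ p
        = Matrix.transvection t.i t.j ((p : k) * t.c) := by
      intro p
      induction p with
      | zero => simp [Matrix.transvection_zero]
      | succ p ih =>
        rw [pow_succ, ih, Matrix.transvection_mul_transvection_same t.i t.j t.hij]
        congr 1
        push_cast
        ring
    have hTq : t.toMatrix ^ Fintype.card k = 1 := by
      show Matrix.transvection t.i t.j t.c ^ Fintype.card k = 1
      rw [hpow, FiniteField.cast_card_eq_zero, zero_mul, Matrix.transvection_zero]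
    have hiter : ∀ (p : ℕ) (v : n → k), (σ ^ p) v = (t.toMatrix ^ p).mulVec v := by
      intro p
      induction p with
      | zero => intro v; simp [Matrix.one_mulVec]
      | succ p ih =>
        intro v
        rw [pow_succ, Equiv.Perm.mul_apply, hσ, ih, Matrix.mulVec_mulVec, ← pow_succ]
    have hσq : σ ^ Fintype.card k = 1 := by
      apply Equiv.ext
      intro v
      rw [hiter, hTq, Matrix.one_mulVec]
      rfl
    have hs : Equiv.Perm.sign σ = 1 :=
      units_pow_odd_eq_one _ hodd (by rw [← map_pow, hσq, _root_.map_one])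
    rw [hs, t.det, one_pow]
    simp
  · intro A B hA hB IHA IHB σ hσ
    have hA' : IsUnit A.det := hA.isUnit
    have hB' : IsUnit B.det := hB.isUnit
    have hdecomp : σ = mulVecPerm A hA' * mulVecPerm B hB' := by
      apply Equiv.ext
      intro v
      rw [hσ, Equiv.Perm.mul_apply, mulVecPerm_apply, mulVecPerm_apply, Matrix.mulVec_mulVec]
    rw [hdecomp, _root_.map_mul]
    push_cast
    rw [IHA (mulVecPerm A hA') (fun v => rfl), IHB (mulVecPerm B hB') (fun v => rfl),
      Matrix.det_mul, mul_pow]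
end aux2

/-- for a finite field `k` of odd cardinality `q`, `r ≥ 1` and an invertible
`r × r` matrix `M` over `k`, the sign of the permutation `v ↦ M · v` of `k^r`, cast into `k`,
equals `(det M) ^ ((q - 1) / 2)`. -/
theorem sign_mulVec_eq_det_pow {k : Type*} [Field k] [Fintype k] [DecidableEq k]
    (hodd : Odd (Fintype.card k)) (r : ℕ) (hr : 1 ≤ r)
    (M : Matrix (Fin r) (Fin r) k) (hM : IsUnit M.det)
    (e : Equiv.Perm (Fin r → k)) (he : ∀ v, e v = M.mulVec v) :
    ((Equiv.Perm.sign e : ℤ) : k) = M.det ^ ((Fintype.card k - 1) / 2) :=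
  key hodd M hM.ne_zero e he
end

section
/- Generalised Gauss lemma: Let k be a finite field of cardinality q and let n be a positive divisor of q−1; let μ_n = {x ∈ k : x^n = 1}. Let R ⊆ k \ {0} be a transversal of the μ_n-orbits, i.e. every nonzero y ∈ k can be written uniquely as y = u·x with u ∈ μ_n and x ∈ R. Let a ∈ k be nonzero, and suppose c : R → k and ρ : R → R are functions such that for every x ∈ R one has (c x)^n = 1 and a·x = (c x)·(ρ x). Then ∏_{x ∈ R} c x = a^((q−1)/n). -/
/-- generalised Gauss lemma: let `k` be a finite field of cardinality `q`,
`n` a positive divisor of `q - 1`, `R` a transversal of the `μ_n`-orbits in `k \ {0}`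
(every nonzero `y` is uniquely `u * x` with `u^n = 1` and `x ∈ R`). If `a ≠ 0` and
`c, ρ` satisfy `(c x)^n = 1` and `a * x = c x * ρ x` with `ρ x ∈ R` for all `x ∈ R`,
then `∏_{x ∈ R} c x = a ^ ((q - 1) / n)`. -/
theorem gauss_lemma_general {k : Type*} [Field k] [Fintype k] [DecidableEq k]
    (n : ℕ) (hn : 0 < n) (hdvd : n ∣ Fintype.card k - 1)
    (R : Finset k) (hR0 : (0 : k) ∉ R)
    (htrans : ∀ y : k, y ≠ 0 → ∃! p : k × k, p.1 ^ n = 1 ∧ p.2 ∈ R ∧ y = p.1 * p.2)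
    (a : k) (ha : a ≠ 0) (c : k → k) (ρ : k → k)
    (hcρ : ∀ x ∈ R, (c x) ^ n = 1 ∧ ρ x ∈ R ∧ a * x = c x * ρ x) :
    ∏ x ∈ R, c x = a ^ ((Fintype.card k - 1) / n) := by
  classical
  have hq1 : 1 < Fintype.card k := Fintype.one_lt_card
  have hq0 : Fintype.card k - 1 ≠ 0 := by omega
  -- Step 1: there is a primitive n-th root of unity in k
  obtain ⟨g, hg⟩ := IsCyclic.exists_monoid_generator (α := kˣ)
  have hg' : ∀ y : kˣ, y ∈ Subgroup.zpowers g := by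
    intro y
    obtain ⟨m, hm⟩ := hg y
    exact ⟨m, by simpa using hm⟩
  have hord : orderOf g = Fintype.card k - 1 := by
    rw [orderOf_eq_card_of_forall_mem_zpowers hg', Nat.card_eq_fintype_card,
      Fintype.card_units]
  have hζu : orderOf (g ^ ((Fintype.card k - 1) / n)) = n := by
    rw [orderOf_pow, hord, Nat.gcd_eq_right (Nat.div_dvd_of_dvd hdvd),
      Nat.div_div_self hdvd hq0]
  have hζord : orderOf ((↑(g ^ ((Fintype.card k - 1) / n)) : k)) = n := by
    rw [orderOf_units]; exact hζu
  have hζ : IsPrimitiveRoot ((↑(g ^ ((Fintype.card k - 1) / n)) : k)) n := by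
    have h := IsPrimitiveRoot.orderOf ((↑(g ^ ((Fintype.card k - 1) / n)) : k))
    rwa [hζord] at h
  -- Step 2: the set of n-th roots of unity has cardinality n
  have hcardμ : (Finset.univ.filter fun u : k => u ^ n = 1).card = n := by
    have heq : (Finset.univ.filter fun u : k => u ^ n = 1)
        = Polynomial.nthRootsFinset n (1 : k) := by
      ext x
      simp [Polynomial.mem_nthRootsFinset hn]
    rw [heq, hζ.card_nthRootsFinset]
  -- Step 3: counting: n * R.card = q - 1
  have hbij : ((Finset.univ.filter fun u : k => u ^ n = 1) ×ˢ R).card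
      = (Finset.univ.erase (0 : k)).card := by
    apply Finset.card_bij (fun p _ => p.1 * p.2)
    · intro p hp
      simp only [Finset.mem_product, Finset.mem_filter] at hp
      have h1 : p.1 ≠ 0 := by
        intro h0
        rw [h0, zero_pow hn.ne'] at hp
        exact zero_ne_one hp.1.2
      have h2 : p.2 ≠ 0 := fun h0 => hR0 (h0 ▸ hp.2)
      simp [Finset.mem_erase, mul_ne_zero h1 h2]
    · intro p hp p' hp' heq
      simp only [Finset.mem_product, Finset.mem_filter] at hp hp'
      have hp10 : p.1 ≠ 0 := by
        intro h0
        rw [h0, zero_pow hn.ne'] at hp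
        exact zero_ne_one hp.1.2
      have hp20 : p.2 ≠ 0 := fun h0 => hR0 (h0 ▸ hp.2)
      obtain ⟨w, -, hu⟩ := htrans (p.1 * p.2) (mul_ne_zero hp10 hp20)
      have e1 := hu p ⟨hp.1.2, hp.2, rfl⟩
      have e2 := hu p' ⟨hp'.1.2, hp'.2, heq⟩
      rw [e1, e2]
    · intro y hy
      have hy0 : y ≠ 0 := (Finset.mem_erase.mp hy).1
      obtain ⟨p, ⟨h1, h2, h3⟩, -⟩ := htrans y hy0
      exact ⟨p, by simp [Finset.mem_product, Finset.mem_filter, h1, h2], h3.symm⟩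
  rw [Finset.card_product, hcardμ, Finset.card_erase_of_mem (Finset.mem_univ 0),
    Finset.card_univ] at hbij
  have hcardR : R.card = (Fintype.card k - 1) / n := by
    rw [← hbij, Nat.mul_div_cancel_left _ hn]
  -- Step 4: ρ is injective on R
  have hρinj : Set.InjOn ρ R := by
    intro x hx x' hx' h
    obtain ⟨hcx, hρx, hax⟩ := hcρ x hx
    obtain ⟨hcx', hρx', hax'⟩ := hcρ x' hx'
    have hx0 : x ≠ 0 := fun h0 => hR0 (h0 ▸ hx)
    have hc'0 : c x' ≠ 0 := by
      intro h0
      rw [h0, zero_pow hn.ne'] at hcx'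
      exact zero_ne_one hcx'
    have hr : ρ x' = (c x')⁻¹ * (a * x') := by
      rw [hax']
      field_simp
    have h5 : a * x * c x' = a * (c x * (c x')⁻¹ * x') * c x' := by
      rw [hax, h, hr]
      field_simp
    have h6 : x = c x * (c x')⁻¹ * x' :=
      mul_left_cancel₀ ha (mul_right_cancel₀ hc'0 h5)
    obtain ⟨w, -, hu⟩ := htrans x hx0
    have e1 := hu (1, x) ⟨one_pow n, hx, (one_mul x).symm⟩
    have e2 := hu (c x * (c x')⁻¹, x')
      ⟨by rw [mul_pow, hcx, inv_pow, hcx']; norm_num, hx', h6⟩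
    have := e1.trans e2.symm
    exact (Prod.mk.injEq _ _ _ _ ▸ this).2
  -- Step 5: ρ permutes R, so ∏ ρ x = ∏ x
  have himg : R.image ρ = R := by
    apply Finset.eq_of_subset_of_card_le
    · intro y hy
      obtain ⟨x, hx, rfl⟩ := Finset.mem_image.mp hy
      exact (hcρ x hx).2.1
    · rw [Finset.card_image_of_injOn hρinj]
  have hprodρ : ∏ x ∈ R, ρ x = ∏ x ∈ R, x := by
    conv_rhs => rw [← himg]
    rw [Finset.prod_image (fun x hx y hy => hρinj hx hy)]
  -- Step 6: the product identity
  have h1 : ∏ x ∈ R, (a * x) = a ^ R.card * ∏ x ∈ R, x := by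
    rw [Finset.prod_mul_distrib, Finset.prod_const]
  have h2 : ∏ x ∈ R, (a * x) = (∏ x ∈ R, c x) * ∏ x ∈ R, x := by
    rw [Finset.prod_congr rfl (fun x hx => (hcρ x hx).2.2),
      Finset.prod_mul_distrib, hprodρ]
  have hprodne : (∏ x ∈ R, x) ≠ 0 :=
    Finset.prod_ne_zero_iff.mpr (fun x hx h0 => hR0 (h0 ▸ hx))
  have hfin := mul_right_cancel₀ hprodne (h2.symm.trans h1)
  rw [hfin, hcardR]
end

section
/- Let k be a finite field of cardinality q, let n be a positive divisor of q−1, let r ≥ 1, and let M be an invertible r × r matrix over k. Let R ⊆ k^r \ {0} be a transversal of the μ_n-orbits for the scalar action of μ_n = {u ∈ k : u^n = 1} on k^r \ {0}, i.e. every nonzero v ∈ k^r can be written uniquely as v = u • x with u ∈ μ_n and x ∈ R. Suppose c : R → k and ρ : R → R are functions such that for every x ∈ R one has (c x)^n = 1 and M·x = (c x) • (ρ x). Then ∏_{x ∈ R} c x = (det M)^((q−1)/n). -/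
open Matrix Finset Polynomial

namespace GaussLemmaAux

variable {k : Type*} [Field k] [Fintype k] [DecidableEq k]
variable {n r : ℕ} {R : Finset (Fin r → k)}

open scoped Classical in
noncomputable def part (n : ℕ) (R : Finset (Fin r → k)) (v : Fin r → k) : k × (Fin r → k) :=
  if h : ∃ p : k × (Fin r → k), p.1 ^ n = 1 ∧ p.2 ∈ R ∧ v = p.1 • p.2 then h.choose else (1, v)

section

variable (htrans : ∀ v : Fin r → k, v ≠ 0 →
    ∃! p : k × (Fin r → k), p.1 ^ n = 1 ∧ p.2 ∈ R ∧ v = p.1 • p.2)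

include htrans in
theorem part_eq {v : Fin r → k} (hv : v ≠ 0) {a : k} {y : Fin r → k}
    (h1 : a ^ n = 1) (h2 : y ∈ R) (h3 : v = a • y) : part n R v = (a, y) := by
  have hex : ∃ p : k × (Fin r → k), p.1 ^ n = 1 ∧ p.2 ∈ R ∧ v = p.1 • p.2 := ⟨(a, y), h1, h2, h3⟩
  rw [part, dif_pos hex]
  exact (htrans v hv).unique hex.choose_spec ⟨h1, h2, h3⟩

include htrans in
theorem part_spec {v : Fin r → k} (hv : v ≠ 0) :
    (part n R v).1 ^ n = 1 ∧ (part n R v).2 ∈ R ∧ v = (part n R v).1 • (part n R v).2 := by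
  have hex := (htrans v hv).exists
  rw [part, dif_pos hex]
  exact hex.choose_spec

end

noncomputable def uu (n : ℕ) (R : Finset (Fin r → k)) (N : Matrix (Fin r) (Fin r) k)
    (x : Fin r → k) : k := (part n R (N.mulVec x)).1

noncomputable def rr (n : ℕ) (R : Finset (Fin r → k)) (N : Matrix (Fin r) (Fin r) k)
    (x : Fin r → k) : Fin r → k := (part n R (N.mulVec x)).2

noncomputable def chi (n : ℕ) (R : Finset (Fin r → k)) (N : Matrix (Fin r) (Fin r) k) : k :=
  ∏ x ∈ R, uu n R N x

theorem mem_ne_zero (hR0 : (0 : Fin r → k) ∉ R) {x : Fin r → k} (hx : x ∈ R) : x ≠ 0 :=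
  fun h => hR0 (h ▸ hx)

theorem mulVec_inj {N : Matrix (Fin r) (Fin r) k} (hN : IsUnit N.det) {x y : Fin r → k}
    (h : N.mulVec x = N.mulVec y) : x = y := by
  have hx : x = N⁻¹.mulVec (N.mulVec x) := by
    rw [mulVec_mulVec, nonsing_inv_mul N hN, one_mulVec]
  have hy : y = N⁻¹.mulVec (N.mulVec y) := by
    rw [mulVec_mulVec, nonsing_inv_mul N hN, one_mulVec]
  rw [hx, hy, h]

theorem mulVec_ne {N : Matrix (Fin r) (Fin r) k} (hN : IsUnit N.det) {x : Fin r → k}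
    (hx : x ≠ 0) : N.mulVec x ≠ 0 := by
  intro h
  exact hx (mulVec_inj hN (by rw [h, mulVec_zero]))

theorem pow_ne_zero_of_eq_one (hn : 0 < n) {a : k} (h : a ^ n = 1) : a ≠ 0 := by
  intro h0
  rw [h0, zero_pow hn.ne'] at h
  exact one_ne_zero h.symm

section

variable (hn : 0 < n) (hR0 : (0 : Fin r → k) ∉ R)
variable (htrans : ∀ v : Fin r → k, v ≠ 0 →
    ∃! p : k × (Fin r → k), p.1 ^ n = 1 ∧ p.2 ∈ R ∧ v = p.1 • p.2)

include hR0 htrans in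
theorem uu_spec {N : Matrix (Fin r) (Fin r) k} (hN : IsUnit N.det) {x : Fin r → k} (hx : x ∈ R) :
    (uu n R N x) ^ n = 1 ∧ rr n R N x ∈ R ∧ N.mulVec x = uu n R N x • rr n R N x :=
  part_spec htrans (mulVec_ne hN (mem_ne_zero hR0 hx))

include hn hR0 htrans in
theorem rr_injOn {N : Matrix (Fin r) (Fin r) k} (hN : IsUnit N.det) :
    Set.InjOn (rr n R N) ↑R := by
  intro x hx y hy h
  rw [Finset.mem_coe] at hx hy
  obtain ⟨hux, hrx, hdx⟩ := uu_spec hR0 htrans hN hx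
  obtain ⟨huy, hry, hdy⟩ := uu_spec hR0 htrans hN hy
  have huy0 : uu n R N y ≠ 0 := pow_ne_zero_of_eq_one hn huy
  set a : k := uu n R N x * (uu n R N y)⁻¹ with ha
  have hxy : x = a • y := by
    apply mulVec_inj hN
    rw [mulVec_smul, hdx, hdy, h, smul_smul, ha, mul_assoc, inv_mul_cancel₀ huy0, mul_one]
  have han : a ^ n = 1 := by
    rw [ha, mul_pow, hux, inv_pow, huy, inv_one, one_mul]
  have := (htrans x (mem_ne_zero hR0 hx)).unique (y₁ := ((1:k), x)) (y₂ := (a, y))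
    ⟨one_pow n, hx, (one_smul k x).symm⟩ ⟨han, hy, hxy⟩
  exact congrArg Prod.snd this

include hn hR0 htrans in
theorem chi_mul {A B : Matrix (Fin r) (Fin r) k} (hA : IsUnit A.det) (hB : IsUnit B.det) :
    chi n R (A * B) = chi n R A * chi n R B := by
  have hAB : IsUnit (A * B).det := by rw [det_mul]; exact hA.mul hB
  have key : ∀ x ∈ R, uu n R (A * B) x = uu n R B x * uu n R A (rr n R B x) := by
    intro x hx
    obtain ⟨hub, hrb, hdb⟩ := uu_spec hR0 htrans hB hx
    obtain ⟨hua, hra, hda⟩ := uu_spec hR0 htrans hA hrb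
    have hvne : (A * B).mulVec x ≠ 0 := mulVec_ne hAB (mem_ne_zero hR0 hx)
    have hdec : (A * B).mulVec x
        = (uu n R B x * uu n R A (rr n R B x)) • rr n R A (rr n R B x) := by
      rw [← mulVec_mulVec, hdb, mulVec_smul, hda, smul_smul]
    have hpow : (uu n R B x * uu n R A (rr n R B x)) ^ n = 1 := by
      rw [mul_pow, hub, hua, one_mul]
    have := part_eq htrans hvne hpow hra hdec
    show (part n R ((A * B).mulVec x)).1 = _
    rw [this]
  calc chi n R (A * B) = ∏ x ∈ R, (uu n R B x * uu n R A (rr n R B x)) :=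
        Finset.prod_congr rfl key
    _ = (∏ x ∈ R, uu n R B x) * ∏ x ∈ R, uu n R A (rr n R B x) := Finset.prod_mul_distrib
    _ = chi n R A * chi n R B := by
        rw [mul_comm]
        congr 1
        refine Finset.prod_nbij (rr n R B) (fun a ha => (uu_spec hR0 htrans hB ha).2.1)
          (rr_injOn hn hR0 htrans hB) ?_ (fun a _ => rfl)
        intro y hy
        obtain ⟨a, ha, h⟩ := Finset.surj_on_of_inj_on_of_card_le (s := R) (t := R)
          (fun a _ => rr n R B a) (fun a ha => (uu_spec hR0 htrans hB ha).2.1)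
          (fun a₁ a₂ h₁ h₂ h => rr_injOn hn hR0 htrans hB (Finset.mem_coe.2 h₁)
            (Finset.mem_coe.2 h₂) h) le_rfl y (Finset.mem_coe.1 hy)
        exact ⟨a, Finset.mem_coe.2 ha, h.symm⟩

include hR0 htrans in
theorem chi_one : chi n R (1 : Matrix (Fin r) (Fin r) k) = 1 := by
  refine Finset.prod_eq_one fun x hx => ?_
  have hx0 : x ≠ 0 := mem_ne_zero hR0 hx
  have h1 : (1 : Matrix (Fin r) (Fin r) k).mulVec x = x := one_mulVec x
  have := part_eq htrans (h1.symm ▸ hx0) (one_pow n) hx (by rw [h1, one_smul])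
  show (part n R ((1 : Matrix (Fin r) (Fin r) k).mulVec x)).1 = 1
  rw [this]

end

theorem exists_prim (hn : 0 < n) (hdvd : n ∣ Fintype.card k - 1) :
    ∃ ζ : k, IsPrimitiveRoot ζ n := by
  obtain ⟨g, hg⟩ := IsCyclic.exists_ofOrder_eq_natCard (α := kˣ)
  rw [Nat.card_eq_fintype_card, Fintype.card_units] at hg
  have hq1 : Fintype.card k - 1 ≠ 0 := by
    have := Fintype.one_lt_card (α := k)
    omega
  refine ⟨((g ^ ((Fintype.card k - 1) / n) : kˣ) : k), ?_⟩
  rw [IsPrimitiveRoot.coe_units_iff]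
  have horder : orderOf (g ^ ((Fintype.card k - 1) / n)) = n := by
    rw [orderOf_pow, hg, Nat.gcd_eq_right (Nat.div_dvd_of_dvd hdvd),
      Nat.div_div_self hdvd hq1]
  have hpr := IsPrimitiveRoot.orderOf (g ^ ((Fintype.card k - 1) / n))
  rw [horder] at hpr
  exact hpr

theorem pow_card_pow_eq (hdvd : n ∣ Fintype.card k - 1) {ζ : k} (hζ : ζ ^ n = 1) (j : ℕ) :
    ζ ^ (Fintype.card k ^ j) = ζ := by
  induction j with
  | zero => simp
  | succ j ih =>
    rw [pow_succ, pow_mul, ih]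
    obtain ⟨m, hm⟩ := hdvd
    have hq : Fintype.card k = n * m + 1 := by
      have := Fintype.card_pos (α := k)
      omega
    rw [hq, pow_succ, pow_mul, hζ, one_pow, one_mul]

theorem card_ne_at (l : Fin r) :
    (Finset.univ.filter fun v : Fin r → k => v l ≠ 0).card
      = (Fintype.card k - 1) * Fintype.card k ^ (r - 1) := by
  classical
  rw [← Fintype.card_subtype]
  have e : {v : Fin r → k // v l ≠ 0} ≃ {a : k // a ≠ 0} × ({j : Fin r // j ≠ l} → k) :=
    { toFun := fun v => (⟨v.1 l, v.2⟩, fun j => v.1 j.1)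
      invFun := fun p => ⟨fun j => if h : j = l then p.1.1 else p.2 ⟨j, h⟩, by simp [p.1.2]⟩
      left_inv := by
        intro v
        apply Subtype.ext
        funext j
        by_cases h : j = l
        · subst h; simp
        · simp [h]
      right_inv := by
        intro p
        refine Prod.ext ?_ ?_
        · apply Subtype.ext; simp
        · funext j
          simp [j.2] }
  rw [Fintype.card_congr e, Fintype.card_prod, Fintype.card_fun]
  have h1 : Fintype.card {a : k // a ≠ 0} = Fintype.card k - 1 := by
    rw [← Fintype.card_units (α := k)]
    exact Fintype.card_congr unitsEquivNeZero.symm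
  have h2 : Fintype.card {j : Fin r // j ≠ l} = r - 1 := by
    simp [Fintype.card_subtype_compl]
  rw [h1, h2]

section

variable (hn : 0 < n) (hdvd : n ∣ Fintype.card k - 1)
variable (hR0 : (0 : Fin r → k) ∉ R)
variable (htrans : ∀ v : Fin r → k, v ≠ 0 →
    ∃! p : k × (Fin r → k), p.1 ^ n = 1 ∧ p.2 ∈ R ∧ v = p.1 • p.2)

include hn hdvd hR0 htrans in
theorem chi_smul_like {N : Matrix (Fin r) (Fin r) k} (hN : IsUnit N.det) (l : Fin r) (b : k)
    (hb : ∀ v : Fin r → k, N.mulVec v l = b * v l)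
    (hfix : ∀ v : Fin r → k, v l = 0 → N.mulVec v = v) :
    chi n R N = b ^ ((Fintype.card k - 1) / n) := by
  classical
  -- b is nonzero
  have hb0 : b ≠ 0 := by
    have h1 : N.mulVec (N⁻¹.mulVec (Pi.single l 1)) = Pi.single l 1 := by
      rw [mulVec_mulVec, mul_nonsing_inv N hN, one_mulVec]
    have h2 := hb (N⁻¹.mulVec (Pi.single l 1))
    rw [h1, Pi.single_eq_same] at h2
    intro hb0
    rw [hb0, zero_mul] at h2
    exact one_ne_zero h2
  set S := R.filter (fun x => x l ≠ 0) with hS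
  -- off S the unit is 1
  have hoff : ∀ x ∈ R.filter (fun x => ¬ x l ≠ 0), uu n R N x = 1 := by
    intro x hx
    rw [Finset.mem_filter] at hx
    have hx0 : x ≠ 0 := mem_ne_zero hR0 hx.1
    have hfx : N.mulVec x = x := hfix x (not_not.1 hx.2)
    have := part_eq htrans (mulVec_ne hN hx0) (one_pow n) hx.1 (by rw [hfx, one_smul])
    show (part n R (N.mulVec x)).1 = 1
    rw [this]
  have hsplit : chi n R N = ∏ x ∈ S, uu n R N x := by
    rw [chi, ← Finset.prod_filter_mul_prod_filter_not R (fun x => x l ≠ 0) (uu n R N),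
      Finset.prod_eq_one hoff, mul_one]
  have hSR : ↑S ⊆ (↑R : Set (Fin r → k)) := Finset.coe_subset.2 (Finset.filter_subset _ _)
  have hmem : ∀ x ∈ S, x ∈ R := fun x hx => (Finset.mem_filter.1 hx).1
  -- rr maps S to S
  have hmapsto : ∀ x ∈ S, rr n R N x ∈ S := by
    intro x hx
    rw [hS, Finset.mem_filter] at hx ⊢
    obtain ⟨hu, hrmem, hd⟩ := uu_spec hR0 htrans hN hx.1
    refine ⟨hrmem, ?_⟩
    have hval : N.mulVec x l = uu n R N x * rr n R N x l := by
      rw [hd]; simp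
    rw [hb x] at hval
    intro h0
    rw [h0, mul_zero] at hval
    exact (mul_ne_zero hb0 hx.2) hval
  have hinj : Set.InjOn (rr n R N) ↑S := (rr_injOn hn hR0 htrans hN).mono hSR
  have hsurj : Set.SurjOn (rr n R N) ↑S ↑S := by
    intro y hy
    obtain ⟨a, ha, h⟩ := Finset.surj_on_of_inj_on_of_card_le (s := S) (t := S)
      (fun a _ => rr n R N a) (fun a ha => hmapsto a ha)
      (fun a₁ a₂ h₁ h₂ h => hinj (Finset.mem_coe.2 h₁) (Finset.mem_coe.2 h₂) h)
      le_rfl y (Finset.mem_coe.1 hy)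
    exact ⟨a, Finset.mem_coe.2 ha, h.symm⟩
  -- the key product identity
  have key : ∏ x ∈ S, (b * x l) = (∏ x ∈ S, uu n R N x) * ∏ x ∈ S, (rr n R N x l) := by
    rw [← Finset.prod_mul_distrib]
    refine Finset.prod_congr rfl fun x hx => ?_
    rw [← hb x]
    obtain ⟨_, _, hd⟩ := uu_spec hR0 htrans hN (hmem x hx)
    rw [hd]; simp
  have hre : ∏ x ∈ S, (rr n R N x l) = ∏ x ∈ S, x l :=
    Finset.prod_nbij (rr n R N) hmapsto hinj hsurj (fun _ _ => rfl)
  have hprodne : (∏ x ∈ S, x l) ≠ 0 :=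
    Finset.prod_ne_zero_iff.2 (fun x hx => (Finset.mem_filter.1 hx).2)
  have hfin : (∏ x ∈ S, uu n R N x) = b ^ S.card := by
    apply mul_right_cancel₀ hprodne
    calc (∏ x ∈ S, uu n R N x) * ∏ x ∈ S, x l
        = (∏ x ∈ S, uu n R N x) * ∏ x ∈ S, rr n R N x l := by rw [hre]
      _ = ∏ x ∈ S, (b * x l) := key.symm
      _ = b ^ S.card * ∏ x ∈ S, x l := by
          rw [Finset.prod_mul_distrib, Finset.prod_const]
  -- cardinality of S
  obtain ⟨ζ, hζ⟩ := exists_prim hn hdvd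
  have hcards : n * S.card
      = (Fintype.card k - 1) * Fintype.card k ^ (r - 1) := by
    have h1 : ((nthRootsFinset n (1 : k)) ×ˢ S).card
        = (Finset.univ.filter fun v : Fin r → k => v l ≠ 0).card := by
      refine Finset.card_nbij (fun p => p.1 • p.2) ?_ ?_ ?_
      · intro p hp
        rw [Finset.mem_coe, Finset.mem_product] at hp
        have hp1 : p.1 ^ n = 1 := (mem_nthRootsFinset hn _).1 hp.1
        have hp10 : p.1 ≠ 0 := pow_ne_zero_of_eq_one hn hp1
        have hp2 := (Finset.mem_filter.1 hp.2).2
        rw [Finset.mem_coe, Finset.mem_filter]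
        refine ⟨Finset.mem_univ _, ?_⟩
        show (p.1 • p.2) l ≠ 0
        simp only [Pi.smul_apply, smul_eq_mul]
        exact mul_ne_zero hp10 hp2
      · intro p hp q hq h
        rw [Finset.mem_coe, Finset.mem_product] at hp hq
        have hp1 : p.1 ^ n = 1 := (mem_nthRootsFinset hn _).1 hp.1
        have hq1 : q.1 ^ n = 1 := (mem_nthRootsFinset hn _).1 hq.1
        have hp2 : p.2 ∈ R := (Finset.mem_filter.1 hp.2).1
        have hq2 : q.2 ∈ R := (Finset.mem_filter.1 hq.2).1
        have hv0 : p.1 • p.2 ≠ 0 :=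
          smul_ne_zero (pow_ne_zero_of_eq_one hn hp1) (mem_ne_zero hR0 hp2)
        exact (htrans (p.1 • p.2) hv0).unique ⟨hp1, hp2, rfl⟩ ⟨hq1, hq2, h⟩
      · intro v hv
        rw [Finset.mem_coe, Finset.mem_filter] at hv
        have hv0 : v ≠ 0 := by
          intro h0
          exact hv.2 (by rw [h0]; rfl)
        obtain ⟨p, ⟨hp1, hp2, hp3⟩, -⟩ := htrans v hv0
        have hpl : p.2 l ≠ 0 := by
          intro h0
          apply hv.2
          rw [hp3]
          simp [h0]
        refine ⟨p, ?_, hp3.symm⟩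
        rw [Finset.mem_coe, Finset.mem_product]
        exact ⟨(mem_nthRootsFinset hn _).2 hp1, Finset.mem_filter.2 ⟨hp2, hpl⟩⟩
    rw [Finset.card_product, hζ.card_nthRootsFinset] at h1
    rw [h1, card_ne_at l]
  obtain ⟨m, hm⟩ := hdvd
  have hScard : S.card = (Fintype.card k - 1) / n * Fintype.card k ^ (r - 1) := by
    have : n * S.card = n * ((Fintype.card k - 1) / n * Fintype.card k ^ (r - 1)) := by
      rw [hcards, hm]
      rw [Nat.mul_div_cancel_left m hn]
      ring
    exact Nat.eq_of_mul_eq_mul_left hn this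
  rw [hsplit, hfin, hScard, pow_mul]
  have hzn : (b ^ ((Fintype.card k - 1) / n)) ^ n = 1 := by
    rw [← pow_mul, Nat.div_mul_cancel ⟨m, hm⟩]
    exact FiniteField.pow_card_sub_one_eq_one b hb0
  exact pow_card_pow_eq ⟨m, hm⟩ hzn (r - 1)

include hn hdvd hR0 htrans in
theorem chi_transvection (t : TransvectionStruct (Fin r) k) :
    chi n R t.toMatrix = 1 := by
  obtain ⟨i, j, hij, cc⟩ := t
  have hdet : IsUnit (TransvectionStruct.toMatrix ⟨i, j, hij, cc⟩).det := by
    rw [TransvectionStruct.det]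
    exact isUnit_one
  have h := chi_smul_like hn hdvd hR0 htrans hdet j 1
    (by
      intro v
      simp [TransvectionStruct.toMatrix_mk, Matrix.transvection, add_mulVec, one_mulVec,
        smul_mulVec, single_mulVec, Function.update_of_ne (Ne.symm hij)])
    (by
      intro v hv
      simp [TransvectionStruct.toMatrix_mk, Matrix.transvection, add_mulVec, one_mulVec,
        smul_mulVec, single_mulVec, hv, Function.update_eq_self])
  rw [h, one_pow]

include hn hdvd hR0 htrans in
theorem chi_dilation (i : Fin r) {d : k} (hd : d ≠ 0) :
    chi n R (diagonal (fun j => if j = i then d else 1))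
      = d ^ ((Fintype.card k - 1) / n) := by
  have hdet : IsUnit (diagonal (fun j => if j = i then d else 1)).det := by
    rw [det_diagonal]
    rw [Finset.prod_ite_eq' Finset.univ i (fun _ => d)]
    simp [isUnit_iff_ne_zero, hd]
  refine chi_smul_like hn hdvd hR0 htrans hdet i d ?_ ?_
  · intro v
    rw [mulVec_diagonal]
    simp
  · intro v hv
    funext j
    rw [mulVec_diagonal]
    by_cases h : j = i
    · subst h; rw [hv, mul_zero]
    · simp [h]

include hn hR0 htrans in
theorem chi_list : ∀ L : List (Matrix (Fin r) (Fin r) k), (∀ A ∈ L, IsUnit A.det) →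
    IsUnit L.prod.det ∧ chi n R L.prod = (L.map (chi n R)).prod := by
  intro L
  induction L with
  | nil =>
    intro _
    simp only [List.prod_nil, List.map_nil]
    exact ⟨by rw [det_one]; exact isUnit_one, chi_one hR0 htrans⟩
  | cons A L ih =>
    intro hL
    have hA : IsUnit A.det := hL A (List.mem_cons_self)
    obtain ⟨hu, hc⟩ := ih (fun B hB => hL B (List.mem_cons_of_mem _ hB))
    constructor
    · rw [List.prod_cons, det_mul]
      exact hA.mul hu
    · rw [List.prod_cons, List.map_cons, List.prod_cons,
        chi_mul hn hR0 htrans hA hu, hc]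

include hn hdvd hR0 htrans in
theorem chi_diag {D : Fin r → k} (hD : IsUnit (diagonal D).det) :
    chi n R (diagonal D) = (diagonal D).det ^ ((Fintype.card k - 1) / n) := by
  classical
  rw [det_diagonal] at hD ⊢
  have hDne : ∀ i, D i ≠ 0 := by
    intro i
    have := isUnit_iff_ne_zero.1 hD
    intro h0
    exact this (Finset.prod_eq_zero (Finset.mem_univ i) h0)
  have hdec : ∀ L : List (Fin r), L.Nodup →
      (L.map fun i => diagonal (fun j => if j = i then D i else 1)).prod
        = diagonal (fun j => if j ∈ L then D j else 1) := by
    intro L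
    induction L with
    | nil =>
      intro _
      simp only [List.map_nil, List.prod_nil, List.not_mem_nil, if_false]
      rw [← Matrix.diagonal_one]
    | cons a L ih =>
      intro hnd
      rw [List.nodup_cons] at hnd
      rw [List.map_cons, List.prod_cons, ih hnd.2, diagonal_mul_diagonal]
      refine congrArg Matrix.diagonal (funext fun j => ?_)
      by_cases h : j = a
      · subst h
        simp [hnd.1]
      · simp [h]
  have hunit : ∀ i : Fin r, IsUnit (diagonal (fun j => if j = i then D i else 1)).det := by
    intro i
    rw [det_diagonal, Finset.prod_ite_eq' Finset.univ i (fun _ => D i)]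
    simp [isUnit_iff_ne_zero, hDne i]
  have hfull : diagonal D
      = ((List.finRange r).map fun i => diagonal (fun j => if j = i then D i else 1)).prod := by
    rw [hdec (List.finRange r) (List.nodup_finRange r)]
    congr 1
    funext j
    simp [List.mem_finRange]
  obtain ⟨-, hc⟩ := chi_list hn hR0 htrans
    ((List.finRange r).map fun i => diagonal (fun j => if j = i then D i else 1))
    (by
      intro A hA
      rw [List.mem_map] at hA
      obtain ⟨i, -, rfl⟩ := hA
      exact hunit i)
  rw [hfull, hc, List.map_map]
  have hptw : ((chi n R) ∘ fun i => diagonal fun j => if j = i then D i else 1)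
      = fun i : Fin r => D i ^ ((Fintype.card k - 1) / n) := by
    funext i
    exact chi_dilation hn hdvd hR0 htrans i (hDne i)
  rw [hptw, ← Fin.prod_univ_def, ← Finset.prod_pow]

include hn hdvd hR0 htrans in
theorem chi_eq {N : Matrix (Fin r) (Fin r) k} (hN : N.det ≠ 0) :
    chi n R N = N.det ^ ((Fintype.card k - 1) / n) := by
  refine Matrix.diagonal_transvection_induction_of_det_ne_zero
    (fun A => chi n R A = A.det ^ ((Fintype.card k - 1) / n)) N hN ?_ ?_ ?_
  · intro D hD
    exact chi_diag hn hdvd hR0 htrans (isUnit_iff_ne_zero.2 hD)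
  · intro t
    rw [TransvectionStruct.det, one_pow]
    exact chi_transvection hn hdvd hR0 htrans t
  · intro A B hA hB hPA hPB
    rw [chi_mul hn hR0 htrans (isUnit_iff_ne_zero.2 hA) (isUnit_iff_ne_zero.2 hB),
      hPA, hPB, det_mul, mul_pow]

end

end GaussLemmaAux

/-- let `k` be a finite field of cardinality `q`, `n` a positive divisor of
`q - 1`, `r ≥ 1`, `M` an invertible `r × r` matrix over `k`, and `R` a transversal of the
orbits of the scalar action of `μ_n` on `k^r \ {0}` (every nonzero `v` is uniquely `u • x`
with `u^n = 1`, `x ∈ R`). If `c, ρ` satisfy `(c x)^n = 1`, `ρ x ∈ R` and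
`M · x = (c x) • ρ x` for all `x ∈ R`, then `∏_{x ∈ R} c x = (det M) ^ ((q - 1) / n)`. -/
theorem gauss_lemma_matrix {k : Type*} [Field k] [Fintype k] [DecidableEq k]
    (n : ℕ) (hn : 0 < n) (hdvd : n ∣ Fintype.card k - 1)
    (r : ℕ) (hr : 1 ≤ r) (M : Matrix (Fin r) (Fin r) k) (hM : IsUnit M.det)
    (R : Finset (Fin r → k)) (hR0 : (0 : Fin r → k) ∉ R)
    (htrans : ∀ v : Fin r → k, v ≠ 0 →
      ∃! p : k × (Fin r → k), p.1 ^ n = 1 ∧ p.2 ∈ R ∧ v = p.1 • p.2)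
    (c : (Fin r → k) → k) (ρ : (Fin r → k) → Fin r → k)
    (hcρ : ∀ x ∈ R, (c x) ^ n = 1 ∧ ρ x ∈ R ∧ M.mulVec x = c x • ρ x) :
    ∏ x ∈ R, c x = M.det ^ ((Fintype.card k - 1) / n) := by
  have hchi : ∏ x ∈ R, c x = GaussLemmaAux.chi n R M := by
    refine Finset.prod_congr rfl fun x hx => ?_
    obtain ⟨h1, h2, h3⟩ := hcρ x hx
    have hne : M.mulVec x ≠ 0 :=
      GaussLemmaAux.mulVec_ne hM (GaussLemmaAux.mem_ne_zero hR0 hx)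
    have := GaussLemmaAux.part_eq htrans hne h1 h2 h3
    show c x = (GaussLemmaAux.part n R (M.mulVec x)).1
    rw [this]
  rw [hchi]
  exact GaussLemmaAux.chi_eq hn hdvd hR0 htrans (by simpa [isUnit_iff_ne_zero] using hM)
end

section
/- Abelianisation of the wreath product: Let G be a commutative group, let t ≥ 2, and let Γ = (Fin t → G) ⋊ Perm(Fin t) be the semidirect product in which a permutation σ acts on v : Fin t → G by (σ • v) i = v (σ⁻¹ i). Let q : Γ → G × ℤˣ be the group homomorphism sending (v, σ) to (∏_{i} v i, sign σ). Then every group homomorphism φ from Γ to a commutative group A factors through q: there exists a homomorphism ψ : G × ℤˣ → A with φ = ψ ∘ q. -/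
/-- The action of the symmetric group `Perm (Fin t)` on `Fin t → G` by
`(σ • v) i = v (σ⁻¹ i)`, as a homomorphism to the automorphism group. -/
def permAut (G : Type*) [CommGroup G] (t : ℕ) :
    Equiv.Perm (Fin t) →* MulAut (Fin t → G) where
  toFun σ :=
    { toFun := fun v i => v (σ⁻¹ i)
      invFun := fun v i => v (σ i)
      left_inv := fun v => funext fun i => by simp
      right_inv := fun v => funext fun i => by simp
      map_mul' := fun v w => rfl }
  map_one' := by ext v i; simp
  map_mul' σ τ := by ext v i; simp

/-- abelianisation of the wreath product: let `G` be a commutative group,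
`t ≥ 2`, and `Γ = (Fin t → G) ⋊ Perm (Fin t)` with `σ` acting by `(σ • v) i = v (σ⁻¹ i)`.
Let `q : Γ →* G × ℤˣ` send `(v, σ)` to `(∏ i, v i, sign σ)`. Then every homomorphism `φ`
from `Γ` to a commutative group `A` factors as `φ = ψ ∘ q` for some `ψ : G × ℤˣ →* A`. -/
theorem wreath_abelianization {G : Type*} [CommGroup G] (t : ℕ) (ht : 2 ≤ t)
    (q : SemidirectProduct (Fin t → G) (Equiv.Perm (Fin t)) (permAut G t) →* G × ℤˣ)
    (hq : ∀ (v : Fin t → G) (σ : Equiv.Perm (Fin t)),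
      q ⟨v, σ⟩ = (∏ i, v i, Equiv.Perm.sign σ))
    {A : Type*} [CommGroup A]
    (φ : SemidirectProduct (Fin t → G) (Equiv.Perm (Fin t)) (permAut G t) →* A) :
    ∃ ψ : G × ℤˣ →* A, φ = ψ.comp q := by
  have hconj : ∀ a b : A, a * b * a⁻¹ = b := by
    intro a b; rw [mul_comm, ← mul_assoc, inv_mul_cancel, one_mul]
  have h0t : 0 < t := by omega
  have h1t : 1 < t := by omega
  set i0 : Fin t := ⟨0, h0t⟩
  set i1 : Fin t := ⟨1, h1t⟩
  have hi01 : i0 ≠ i1 := by simp [i0, i1, Fin.ext_iff]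
  let f : G →* A := φ.comp (SemidirectProduct.inl.comp (MonoidHom.mulSingle (fun _ : Fin t => G) i0))
  set s : A := φ (SemidirectProduct.inr (Equiv.swap i0 i1)) with hs
  have hs2 : s * s = 1 := by
    rw [hs, ← map_mul, ← map_mul]
    simp [Equiv.swap_mul_self]
  let ε : ℤˣ →* A :=
    { toFun := fun u => if u = 1 then 1 else s
      map_one' := by simp
      map_mul' := by
        intro u v
        rcases Int.units_eq_one_or u with hu | hu <;>
          rcases Int.units_eq_one_or v with hv | hv <;>
          subst hu <;> subst hv <;> simp [hs2] }
  have hswap : ∀ x y : Fin t, x ≠ y → φ (SemidirectProduct.inr (Equiv.swap x y)) = s := by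
    intro x y hxy
    obtain ⟨c, hc⟩ := Equiv.Perm.isConj_swap hi01 hxy
    have h1 : Equiv.swap x y = ↑c * Equiv.swap i0 i1 * (↑c)⁻¹ := by
      rw [eq_mul_inv_iff_mul_eq]
      exact hc.symm
    rw [h1, map_mul, map_mul, map_mul, map_mul, map_inv, map_inv]
    exact hconj _ _
  have hsign : ∀ σ : Equiv.Perm (Fin t),
      φ (SemidirectProduct.inr σ) = ε (Equiv.Perm.sign σ) := by
    intro σ
    refine Equiv.Perm.swap_induction_on σ ?_ ?_
    · simp [ε]
    · intro τ x y hxy ih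
      rw [map_mul, map_mul, map_mul, ih, hswap x y hxy]
      rcases Int.units_eq_one_or (Equiv.Perm.sign τ) with h | h <;>
        simp [ε, h, Equiv.Perm.sign_swap hxy, hs2]
  have keygen : ∀ (σ : Equiv.Perm (Fin t)) (j : Fin t) (g : G),
      (permAut G t) σ (Pi.mulSingle j g) = Pi.mulSingle (σ j) g := by
    intro σ j g
    funext x
    have happ : ((permAut G t) σ) (Pi.mulSingle j g) x
        = Pi.mulSingle (M := fun _ : Fin t => G) j g (σ⁻¹ x) := rfl
    rw [happ]
    rcases eq_or_ne x (σ j) with rfl | hx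
    · rw [Equiv.Perm.inv_def, Equiv.symm_apply_apply, Pi.mulSingle_eq_same, Pi.mulSingle_eq_same]
    · rw [Pi.mulSingle_eq_of_ne hx, Pi.mulSingle_eq_of_ne]
      intro h
      exact hx (by rw [← h]; simp)
  have hsingle : ∀ (i : Fin t) (g : G),
      φ (SemidirectProduct.inl (Pi.mulSingle i g)) = f g := by
    intro i g
    by_cases hi : i = i0
    · subst hi; rfl
    · have := SemidirectProduct.inl_aut (φ := permAut G t) (Equiv.swap i0 i) (Pi.mulSingle i0 g)
      rw [keygen, Equiv.swap_apply_left] at this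
      have hfg : φ (SemidirectProduct.inl (Pi.mulSingle i0 g)) = f g := rfl
      rw [this, map_mul, map_mul, map_inv, map_inv, hfg]
      exact hconj _ _
  have hprod : ∀ v : Fin t → G, φ (SemidirectProduct.inl v) = f (∏ i, v i) := by
    intro v
    have h1 : φ (SemidirectProduct.inl v)
        = ∏ i, φ (SemidirectProduct.inl (Pi.mulSingle i (v i))) := by
      have := map_prod (φ.comp SemidirectProduct.inl)
        (fun i => Pi.mulSingle i (v i)) Finset.univ
      rw [Finset.univ_prod_mulSingle] at this
      simpa using this
    rw [h1]
    simp_rw [hsingle]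
    rw [← map_prod]
  refine ⟨f.coprod ε, ?_⟩
  ext ⟨v, σ⟩
  have hmk : (⟨v, σ⟩ : SemidirectProduct (Fin t → G) (Equiv.Perm (Fin t)) (permAut G t)) =
      SemidirectProduct.inl v * SemidirectProduct.inr σ := by
    ext <;> simp
  rw [MonoidHom.comp_apply, hq, hmk, map_mul, hprod, hsign]
  rfl
end

section
/- Independence of the determinant of a μ-set automorphism from the choice of representatives: Let G be a finite commutative group acting freely on a finite set S, and let f : S → S be a G-equivariant bijection. Suppose R and R' are two transversals of the G-orbits in S (subsets containing exactly one element of each orbit), and suppose c : R → G, ρ : R → R, c' : R' → G, ρ' : R' → R' are functions such that for every x ∈ R, f x = (c x) • (ρ x), and for every x ∈ R', f x = (c' x) • (ρ' x). Then ∏_{x ∈ R} c x = ∏_{x ∈ R'} c' x. -/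
/-- let a finite commutative group `G` act freely on a finite set `S`, and let
`f : S ≃ S` be `G`-equivariant. If `R`, `R'` are two transversals of the `G`-orbits and
`c, ρ` (resp. `c', ρ'`) satisfy `f x = (c x) • ρ x` with `ρ x ∈ R` for `x ∈ R`
(resp. the primed version for `R'`), then `∏_{x ∈ R} c x = ∏_{x ∈ R'} c' x`. -/
theorem det_independent_of_transversal {G S : Type*} [CommGroup G] [Fintype G]
    [Fintype S] [MulAction G S]
    (hfree : ∀ (g : G) (x : S), g • x = x → g = 1)
    (f : S ≃ S) (hf : ∀ (g : G) (x : S), f (g • x) = g • f x)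
    (R R' : Finset S)
    (hR : ∀ y : S, ∃! p : G × S, p.2 ∈ R ∧ y = p.1 • p.2)
    (hR' : ∀ y : S, ∃! p : G × S, p.2 ∈ R' ∧ y = p.1 • p.2)
    (c : S → G) (ρ : S → S) (hcρ : ∀ x ∈ R, ρ x ∈ R ∧ f x = c x • ρ x)
    (c' : S → G) (ρ' : S → S) (hcρ' : ∀ x ∈ R', ρ' x ∈ R' ∧ f x = c' x • ρ' x) :
    ∏ x ∈ R, c x = ∏ x ∈ R', c' x := by
  classical
  choose p hp hu using hR'
  choose q hq huq using hR
  set a : S → G := fun y => (p y).1 with ha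
  set t : S → S := fun y => (p y).2 with ht
  have uniq' : ∀ (y : S) (g₁ g₂ : G) (r₁ r₂ : S), r₁ ∈ R' → r₂ ∈ R' →
      y = g₁ • r₁ → y = g₂ • r₂ → g₁ = g₂ ∧ r₁ = r₂ := by
    intro y g₁ g₂ r₁ r₂ h₁ h₂ e₁ e₂
    have h1 := hu y (g₁, r₁) ⟨h₁, e₁⟩
    have h2 := hu y (g₂, r₂) ⟨h₂, e₂⟩
    have h3 := h1.trans h2.symm
    exact ⟨congrArg Prod.fst h3, congrArg Prod.snd h3⟩
  have uniqR : ∀ (y : S) (g₁ g₂ : G) (r₁ r₂ : S), r₁ ∈ R → r₂ ∈ R →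
      y = g₁ • r₁ → y = g₂ • r₂ → g₁ = g₂ ∧ r₁ = r₂ := by
    intro y g₁ g₂ r₁ r₂ h₁ h₂ e₁ e₂
    have h1 := huq y (g₁, r₁) ⟨h₁, e₁⟩
    have h2 := huq y (g₂, r₂) ⟨h₂, e₂⟩
    have h3 := h1.trans h2.symm
    exact ⟨congrArg Prod.fst h3, congrArg Prod.snd h3⟩
  -- ρ is injective on R
  have hρinj : ∀ x ∈ R, ∀ y ∈ R, ρ x = ρ y → x = y := by
    intro x hx y hy hxy
    have hfx := (hcρ x hx).2
    have hfy := (hcρ y hy).2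
    have h1 : f x = (c x * (c y)⁻¹) • f y := by
      rw [hfx, hfy, hxy, mul_smul, inv_smul_smul]
    have h2 : f x = f ((c x * (c y)⁻¹) • y) := by rw [hf]; exact h1
    have h3 : x = (c x * (c y)⁻¹) • y := f.injective h2
    exact (uniqR x 1 (c x * (c y)⁻¹) x y hx hy (one_smul G x).symm h3).2
  -- key identity
  have key : ∀ x ∈ R, c x = a x * c' (t x) * (a (ρ x))⁻¹ := by
    intro x hx
    have hpx := hp x
    have hct := hcρ' (t x) hpx.1
    have h1 : f x = (a x * c' (t x)) • ρ' (t x) := by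
      calc f x = f (a x • t x) := by rw [← hpx.2]
        _ = a x • f (t x) := hf _ _
        _ = a x • (c' (t x) • ρ' (t x)) := by rw [hct.2]
        _ = (a x * c' (t x)) • ρ' (t x) := (mul_smul _ _ _).symm
    have hpρ := hp (ρ x)
    have h2 : f x = (c x * a (ρ x)) • t (ρ x) := by
      calc f x = c x • ρ x := (hcρ x hx).2
        _ = c x • (a (ρ x) • t (ρ x)) := by rw [← hpρ.2]
        _ = (c x * a (ρ x)) • t (ρ x) := (mul_smul _ _ _).symm
    have h3 := (uniq' (f x) _ _ _ _ hct.1 hpρ.1 h1 h2).1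
    rw [eq_mul_inv_iff_mul_eq]
    exact h3.symm
  -- t maps R bijectively onto R'
  have prod_t : ∏ x ∈ R, c' (t x) = ∏ x ∈ R', c' x := by
    apply Finset.prod_nbij t
    · intro x hx; exact (hp x).1
    · intro x hx y hy hxy
      have e1 : x = a x • t x := (hp x).2
      have h5 : (a y)⁻¹ • y = t y := by rw [inv_smul_eq_iff]; exact (hp y).2
      have hx' : x = (a x * (a y)⁻¹) • y := by
        rw [mul_smul, h5, ← hxy]; exact e1
      exact (uniqR x 1 (a x * (a y)⁻¹) x y (Finset.mem_coe.mp hx)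
        (Finset.mem_coe.mp hy) (one_smul G x).symm hx').2
    · intro r' hr'
      refine ⟨(q r').2, Finset.mem_coe.mpr (hq r').1, ?_⟩
      have h1 : r' = ((q r').1 * a ((q r').2)) • t ((q r').2) := by
        rw [mul_smul, ← (hp ((q r').2)).2]; exact (hq r').2
      exact (uniq' r' ((q r').1 * a ((q r').2)) 1 (t ((q r').2)) r'
        (hp ((q r').2)).1 (Finset.mem_coe.mp hr') h1 (one_smul G r').symm).2
    · intro x hx; rfl
  -- products of a over R and over ρ(R) agree
  have himg : R.image ρ = R := by
    apply Finset.eq_of_subset_of_card_le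
    · intro y hy
      obtain ⟨x, hx, rfl⟩ := Finset.mem_image.mp hy
      exact (hcρ x hx).1
    · rw [Finset.card_image_of_injOn hρinj]
  have prod_a : ∏ x ∈ R, a (ρ x) = ∏ x ∈ R, a x := by
    rw [← Finset.prod_image (fun x hx y hy => hρinj x hx y hy), himg]
  calc ∏ x ∈ R, c x = ∏ x ∈ R, (a x * c' (t x) * (a (ρ x))⁻¹) :=
        Finset.prod_congr rfl key
    _ = (∏ x ∈ R, a x) * (∏ x ∈ R, c' (t x)) * (∏ x ∈ R, (a (ρ x))⁻¹) := by
        rw [Finset.prod_mul_distrib, Finset.prod_mul_distrib]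
    _ = (∏ x ∈ R, a x) * (∏ x ∈ R, c' (t x)) * (∏ x ∈ R, a (ρ x))⁻¹ := by
        rw [Finset.prod_inv_distrib]
    _ = ∏ x ∈ R, c' (t x) := by rw [prod_a, mul_inv_cancel_comm]
    _ = ∏ x ∈ R', c' x := prod_t
end

section
/- Multiplicativity of the determinant of μ-set automorphisms under pointed products: Let G be a finite commutative group acting freely on finite sets S and T. Let P = {(a, b) ∈ Option S × Option T : (a, b) ≠ (none, none)}, with G acting diagonally by g • (a, b) = (Option.map (g • ·) a, Option.map (g • ·) b); this action on P is free. Let f : S → S be a G-equivariant bijection and let f' : P → P be the induced bijection (a, b) ↦ (Option.map f a, b). Then for any transversal R of the G-orbits in P with cocycle c (defined by f' x = (c x) • (ρ x) with ρ x ∈ R) and any transversal R_S of the G-orbits in S with cocycle c_S (defined by f x = (c_S x) • (ρ_S x) with ρ_S x ∈ R_S), one has ∏_{x ∈ R} c x = ∏_{x ∈ R_S} c_S x. -/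
/-- The diagonal action of `G` on `Option S × Option T` (fixing the added points `none`). -/
def optionSMul {G S T : Type*} [Monoid G] [MulAction G S] [MulAction G T]
    (g : G) (p : Option S × Option T) : Option S × Option T :=
  (p.1.map (g • ·), p.2.map (g • ·))

/-- The bijection of `Option S × Option T` induced by a bijection `f : S ≃ S` on the first
factor. -/
def optionFst {S T : Type*} (f : S ≃ S) (p : Option S × Option T) : Option S × Option T :=
  (p.1.map f, p.2)

-- Auxiliary lemmas
section helpers
variable {G S T : Type*} [CommGroup G] [MulAction G S] [MulAction G T]

lemma optionSMul_one (p : Option S × Option T) : optionSMul (1 : G) p = p := by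
  obtain ⟨a, b⟩ := p
  cases a <;> cases b <;> simp [optionSMul]

lemma optionSMul_mul (g h : G) (p : Option S × Option T) :
    optionSMul (g * h) p = optionSMul g (optionSMul h p) := by
  obtain ⟨a, b⟩ := p
  cases a <;> cases b <;> simp [optionSMul, mul_smul]

lemma optionSMul_ne_base (g : G) (p : Option S × Option T) (hp : p ≠ (none, none)) :
    optionSMul g p ≠ (none, none) := by
  obtain ⟨a, b⟩ := p
  cases a <;> cases b <;> simp_all [optionSMul]

lemma optionFst_ne_base (f : S ≃ S) (p : Option S × Option T) (hp : p ≠ (none, none)) :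
    optionFst f p ≠ (none, none) := by
  obtain ⟨a, b⟩ := p
  cases a <;> cases b <;> simp_all [optionFst]

lemma optionFst_injective (f : S ≃ S) :
    Function.Injective (optionFst (T := T) f) := by
  intro p q h
  obtain ⟨a, b⟩ := p; obtain ⟨a', b'⟩ := q
  simp only [optionFst, Prod.mk.injEq] at h
  exact Prod.ext (Option.map_injective f.injective h.1) h.2

lemma optionFst_smul (f : S ≃ S) (hf : ∀ (g : G) (x : S), f (g • x) = g • f x)
    (g : G) (p : Option S × Option T) :
    optionFst f (optionSMul g p) = optionSMul g (optionFst f p) := by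
  obtain ⟨a, b⟩ := p
  cases a <;> cases b <;> simp [optionFst, optionSMul, hf]

end helpers

lemma exists_transversal {G T : Type*} [Group G] [MulAction G T] [Fintype T]
    (hfreeT : ∀ (g : G) (x : T), g • x = x → g = 1) :
    ∃ RT : Finset T, ∀ t : T, ∃! p : G × T, p.2 ∈ RT ∧ t = p.1 • p.2 := by
  classical
  letI := Fintype.ofFinite (Quotient (MulAction.orbitRel G T))
  refine ⟨Finset.image (fun q : Quotient (MulAction.orbitRel G T) => q.out) Finset.univ, ?_⟩
  intro t
  have hrel : (Quotient.mk (MulAction.orbitRel G T) t).out ∈ MulAction.orbit G t := by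
    have := Quotient.mk_out (s := MulAction.orbitRel G T) t
    exact (MulAction.orbitRel_apply (G := G)).mp this
  obtain ⟨g, hg⟩ := hrel
  refine ⟨(g⁻¹, (Quotient.mk (MulAction.orbitRel G T) t).out),
    ⟨Finset.mem_image_of_mem _ (Finset.mem_univ _), by rw [← hg, inv_smul_smul]⟩, ?_⟩
  rintro ⟨g', r'⟩ ⟨hr', ht'⟩
  obtain ⟨q', -, hq'⟩ := Finset.mem_image.mp hr'
  have horb : q' = Quotient.mk (MulAction.orbitRel G T) t := by
    rw [← Quotient.out_eq q', hq']
    apply Quotient.sound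
    exact (MulAction.orbitRel_apply (G := G)).mpr
      ⟨g'⁻¹, by simp only; rw [ht']; exact inv_smul_smul g' r'⟩
  subst hq'
  rw [horb] at ht' ⊢
  have heq : g' • (Quotient.mk (MulAction.orbitRel G T) t).out
      = g⁻¹ • (Quotient.mk (MulAction.orbitRel G T) t).out := by
    rw [← ht', ← hg, inv_smul_smul]
  have h1 : g * g' = 1 := hfreeT _ _ (by rw [mul_smul, heq, smul_inv_smul])
  have h2 : g' = g⁻¹ := (inv_eq_of_mul_eq_one_right h1).symm
  rw [h2]

lemma prod_cocycle_indep {G X : Type*} [CommGroup G] [DecidableEq X]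
    (sm : G → X → X) (h1 : ∀ x, sm 1 x = x)
    (hm : ∀ (g h : G) (x : X), sm (g * h) x = sm g (sm h x))
    (F : X → X) (hFinj : Function.Injective F)
    (hFeq : ∀ g x, F (sm g x) = sm g (F x))
    (R R' : Finset X)
    (hR : ∀ x : X, ∃! p : G × X, p.2 ∈ R ∧ x = sm p.1 p.2)
    (hR' : ∀ x : X, ∃! p : G × X, p.2 ∈ R' ∧ x = sm p.1 p.2)
    (c : X → G) (ρ : X → X) (hc : ∀ x ∈ R, ρ x ∈ R ∧ F x = sm (c x) (ρ x))
    (c' : X → G) (ρ' : X → X) (hc' : ∀ x ∈ R', ρ' x ∈ R' ∧ F x = sm (c' x) (ρ' x)) :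
    ∏ x ∈ R, c x = ∏ x ∈ R', c' x := by
  classical
  have hcancel : ∀ (g : G) (x y : X), sm g x = sm g y → x = y := by
    intro g x y h
    have h2 := congrArg (sm g⁻¹) h
    rwa [← hm, ← hm, inv_mul_cancel, h1, h1] at h2
  have hinv : ∀ (g : G) (z : X), sm g⁻¹ (sm g z) = z := by
    intro g z; rw [← hm, inv_mul_cancel, h1]
  have uniqR : ∀ (g : G) (x y : X), x ∈ R → y ∈ R → x = sm g y → g = 1 ∧ x = y := by
    intro g x y hx hy hxy
    obtain ⟨p, -, hp⟩ := hR x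
    have e1 := hp (1, x) ⟨hx, (h1 x).symm⟩
    have e2 := hp (g, y) ⟨hy, hxy⟩
    have e3 : (g, y) = ((1 : G), x) := e2.trans e1.symm
    exact ⟨(Prod.mk.injEq _ _ _ _ ▸ e3).1, ((Prod.mk.injEq _ _ _ _ ▸ e3).2).symm ▸ rfl⟩
  set gg : X → G := fun x => (Classical.choose (hR' x).exists).1 with hgg
  set σ : X → X := fun x => (Classical.choose (hR' x).exists).2 with hσ
  have hdec : ∀ x, σ x ∈ R' ∧ x = sm (gg x) (σ x) := fun x =>
    Classical.choose_spec (hR' x).exists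
  have key : ∀ x ∈ R, c x * gg (ρ x) = gg x * c' (σ x) ∧ σ (ρ x) = ρ' (σ x) := by
    intro x hx
    obtain ⟨hρR, hFx⟩ := hc x hx
    have d1 : F x = sm (c x * gg (ρ x)) (σ (ρ x)) := by
      rw [hFx]
      conv_lhs => rw [(hdec (ρ x)).2]
      rw [← hm]
    have d2 : F x = sm (gg x * c' (σ x)) (ρ' (σ x)) := by
      have : F x = sm (gg x) (F (σ x)) := by
        conv_lhs => rw [(hdec x).2]
        rw [hFeq]
      rw [this, (hc' (σ x) (hdec x).1).2, ← hm]
    obtain ⟨p, -, hp⟩ := hR' (F x)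
    have e1 := hp (c x * gg (ρ x), σ (ρ x)) ⟨(hdec (ρ x)).1, d1⟩
    have e2 := hp (gg x * c' (σ x), ρ' (σ x)) ⟨(hc' (σ x) (hdec x).1).1, d2⟩
    have e3 := e1.trans e2.symm
    exact ⟨congrArg Prod.fst e3, congrArg Prod.snd e3⟩
  have hρinj : Set.InjOn ρ R := by
    intro x hx y hy hxy
    have hFx := (hc x hx).2
    have hFy := (hc y hy).2
    have heq : F x = F (sm (c x * (c y)⁻¹) y) := by
      calc F x = sm (c x) (ρ y) := by rw [hFx, hxy]
        _ = sm (c x) (sm (c y)⁻¹ (F y)) := by rw [hFy, hinv]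
        _ = sm (c x * (c y)⁻¹) (F y) := (hm _ _ _).symm
        _ = F (sm (c x * (c y)⁻¹) y) := (hFeq _ _).symm
    exact (uniqR _ _ _ hx hy (hFinj heq)).2
  have hρim : R.image ρ = R := by
    apply Finset.eq_of_subset_of_card_le
    · intro y hy
      obtain ⟨x, hx, rfl⟩ := Finset.mem_image.mp hy
      exact (hc x hx).1
    · rw [Finset.card_image_of_injOn hρinj]
  have hσinj : Set.InjOn σ R := by
    intro x hx y hy hxy
    have hy2 : sm (gg y)⁻¹ y = σ y :=
      (congrArg (sm (gg y)⁻¹) (hdec y).2).trans (hinv _ _)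
    have : x = sm (gg x * (gg y)⁻¹) y := by
      rw [hm, hy2, ← hxy]; exact (hdec x).2
    exact (uniqR _ _ _ hx hy this).2
  have hσim : R.image σ = R' := by
    apply Finset.Subset.antisymm
    · intro y hy
      obtain ⟨x, hx, rfl⟩ := Finset.mem_image.mp hy
      exact (hdec x).1
    · intro x' hx'
      obtain ⟨⟨h, x0⟩, ⟨hx0R, hx0⟩, -⟩ := hR x'
      refine Finset.mem_image.mpr ⟨x0, hx0R, ?_⟩
      obtain ⟨p, -, hp⟩ := hR' x'
      have e1 := hp (1, x') ⟨hx', (h1 x').symm⟩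
      have e2 := hp (h * gg x0, σ x0) ⟨(hdec x0).1, by
        rw [hm, ← (hdec x0).2]; exact hx0⟩
      have := e2.trans e1.symm
      exact congrArg Prod.snd this
  have hprod : (∏ x ∈ R, c x) * ∏ x ∈ R, gg (ρ x) = (∏ x ∈ R, gg x) * ∏ x ∈ R, c' (σ x) := by
    rw [← Finset.prod_mul_distrib, ← Finset.prod_mul_distrib]
    exact Finset.prod_congr rfl fun x hx => (key x hx).1
  have h2 : ∏ x ∈ R, gg (ρ x) = ∏ x ∈ R, gg x := by
    conv_rhs => rw [← hρim]
    rw [Finset.prod_image fun x hx y hy h => hρinj hx hy h]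
  have h3 : ∏ x ∈ R, c' (σ x) = ∏ x ∈ R', c' x := by
    conv_rhs => rw [← hσim]
    rw [Finset.prod_image fun x hx y hy h => hσinj hx hy h]
  rw [h2, mul_comm (∏ x ∈ R, gg x)] at hprod
  rw [← h3]
  exact mul_right_cancel hprod

/-- multiplicativity of the determinant under pointed products: let a finite
commutative group `G` act freely on finite sets `S` and `T`, let
`P = (Option S × Option T) \ {(none, none)}` with the diagonal `G`-action, let `f : S ≃ S` be
`G`-equivariant and `f' : P → P` the induced map `(a, b) ↦ (a.map f, b)`. For any transversal
`R` of the `G`-orbits in `P` with cocycle `c` (given by `f' x = (c x) • ρ x`, `ρ x ∈ R`) and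
any transversal `R_S` of the `G`-orbits in `S` with cocycle `c_S` (given by
`f x = (c_S x) • ρ_S x`, `ρ_S x ∈ R_S`), one has `∏_{x ∈ R} c x = ∏_{x ∈ R_S} c_S x`. -/
theorem det_pointed_product {G S T : Type*} [CommGroup G] [Fintype G]
    [Fintype S] [Fintype T] [MulAction G S] [MulAction G T]
    (hfreeS : ∀ (g : G) (x : S), g • x = x → g = 1)
    (hfreeT : ∀ (g : G) (x : T), g • x = x → g = 1)
    (f : S ≃ S) (hf : ∀ (g : G) (x : S), f (g • x) = g • f x)
    (R : Finset (Option S × Option T))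
    (hRbase : ((none : Option S), (none : Option T)) ∉ R)
    (hR : ∀ p : Option S × Option T, p ≠ (none, none) →
      ∃! gp : G × (Option S × Option T), gp.2 ∈ R ∧ p = optionSMul gp.1 gp.2)
    (c : Option S × Option T → G) (ρ : Option S × Option T → Option S × Option T)
    (hcρ : ∀ x ∈ R, ρ x ∈ R ∧ optionFst f x = optionSMul (c x) (ρ x))
    (RS : Finset S)
    (hRS : ∀ y : S, ∃! p : G × S, p.2 ∈ RS ∧ y = p.1 • p.2)
    (cS : S → G) (ρS : S → S) (hcρS : ∀ x ∈ RS, ρS x ∈ RS ∧ f x = cS x • ρS x) :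
    ∏ x ∈ R, c x = ∏ x ∈ RS, cS x := by
  classical
  obtain ⟨RT, hRT⟩ := exists_transversal hfreeT
  -- cardinality: |T| = |G| * |RT|
  have hbij : Function.Bijective (fun p : G × {t // t ∈ RT} => p.1 • p.2.val) := by
    constructor
    · rintro ⟨g1, t1, ht1⟩ ⟨g2, t2, ht2⟩ h
      simp only at h
      obtain ⟨p, -, hp⟩ := hRT (g1 • t1)
      have e1 := hp (g1, t1) ⟨ht1, rfl⟩
      have e2 := hp (g2, t2) ⟨ht2, h⟩
      have e3 := e1.trans e2.symm
      have hg : g1 = g2 := congrArg Prod.fst e3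
      have ht : t1 = t2 := congrArg Prod.snd e3
      subst hg; subst ht; rfl
    · intro t
      obtain ⟨⟨g, r⟩, ⟨hr, ht⟩, -⟩ := hRT t
      exact ⟨(g, ⟨r, hr⟩), ht.symm⟩
  have hcardT : Fintype.card T = Fintype.card G * RT.card := by
    rw [← Fintype.card_of_bijective hbij, Fintype.card_prod, Fintype.card_coe]
  have hpow : (∏ x ∈ RS, cS x) ^ Fintype.card T = 1 := by
    rw [hcardT, pow_mul, pow_card_eq_one, one_pow]
  -- the pointed-product space as a subtype
  let sm : G → {p : Option S × Option T // p ≠ (none, none)} →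
      {p : Option S × Option T // p ≠ (none, none)} :=
    fun g x => ⟨optionSMul g x.1, optionSMul_ne_base g x.1 x.2⟩
  let F : {p : Option S × Option T // p ≠ (none, none)} →
      {p : Option S × Option T // p ≠ (none, none)} :=
    fun x => ⟨optionFst f x.1, optionFst_ne_base f x.1 x.2⟩
  have hsm1 : ∀ x, sm 1 x = x := fun x => Subtype.ext (optionSMul_one x.1)
  have hsmm : ∀ (g h : G) x, sm (g * h) x = sm g (sm h x) :=
    fun g h x => Subtype.ext (optionSMul_mul g h x.1)
  have hFinj : Function.Injective F :=
    fun x y h => Subtype.ext (optionFst_injective f (congrArg Subtype.val h))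
  have hFeq : ∀ g x, F (sm g x) = sm g (F x) :=
    fun g x => Subtype.ext (optionFst_smul f hf g x.1)
  -- lifting transversals to the subtype
  have lift_tr : ∀ (Ramb : Finset (Option S × Option T)),
      (∀ p : Option S × Option T, p ≠ (none, none) →
        ∃! gp : G × (Option S × Option T), gp.2 ∈ Ramb ∧ p = optionSMul gp.1 gp.2) →
      ∀ x : {p : Option S × Option T // p ≠ (none, none)},
        ∃! p : G × {p : Option S × Option T // p ≠ (none, none)},
          p.2 ∈ Ramb.subtype (fun p => p ≠ (none, none)) ∧ x = sm p.1 p.2 := by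
    intro Ramb htr x
    obtain ⟨⟨g, q⟩, ⟨hqR, hq⟩, huniq⟩ := htr x.1 x.2
    have hqne : q ≠ (none, none) := by
      rintro rfl
      exact x.2 (by rw [hq]; rfl)
    refine ⟨(g, ⟨q, hqne⟩), ⟨Finset.mem_subtype.mpr hqR, Subtype.ext hq⟩, ?_⟩
    rintro ⟨g', q'⟩ ⟨hq'R, hq'⟩
    have h0 := huniq (g', q'.1) ⟨Finset.mem_subtype.mp hq'R, congrArg Subtype.val hq'⟩
    simp only [Prod.mk.injEq]
    exact ⟨congrArg Prod.fst h0, Subtype.ext (congrArg Prod.snd h0)⟩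
  -- lifting cocycles
  let ρlift : (Option S × Option T → Option S × Option T) →
      {p : Option S × Option T // p ≠ (none, none)} →
      {p : Option S × Option T // p ≠ (none, none)} := fun r x =>
    if h : r x.1 ≠ (none, none) then ⟨r x.1, h⟩ else x
  have lift_coc : ∀ (Ramb : Finset (Option S × Option T))
      (cc : Option S × Option T → G) (rr : Option S × Option T → Option S × Option T),
      (∀ x ∈ Ramb, rr x ∈ Ramb ∧ optionFst f x = optionSMul (cc x) (rr x)) →
      ((none, none) ∉ Ramb) →
      ∀ x ∈ Ramb.subtype (fun p => p ≠ (none, none)),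
        ρlift rr x ∈ Ramb.subtype (fun p => p ≠ (none, none)) ∧
          F x = sm (cc x.1) (ρlift rr x) := by
    intro Ramb cc rr hcc hb x hx
    have hx1 : x.1 ∈ Ramb := Finset.mem_subtype.mp hx
    obtain ⟨h1, h2⟩ := hcc x.1 hx1
    have hne : rr x.1 ≠ (none, none) := fun h => hb (h ▸ h1)
    have hd : ρlift rr x = ⟨rr x.1, hne⟩ := dif_pos hne
    rw [hd]
    exact ⟨Finset.mem_subtype.mpr h1, Subtype.ext h2⟩
  -- lifting products
  have prod_lift : ∀ (Ramb : Finset (Option S × Option T)) (u : Option S × Option T → G),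
      ((none, none) ∉ Ramb) →
      ∏ x ∈ Ramb.subtype (fun p => p ≠ ((none : Option S), (none : Option T))), u x.1
        = ∏ x ∈ Ramb, u x := by
    intro Ramb u hb
    have hfil : Ramb.filter (fun p => p ≠ ((none : Option S), (none : Option T))) = Ramb :=
      Finset.filter_true_of_mem (fun x hx h => hb (h ▸ hx))
    calc ∏ x ∈ Ramb.subtype (fun p => p ≠ ((none : Option S), (none : Option T))), u x.1
        = ∏ x ∈ (Ramb.subtype (fun p => p ≠ ((none : Option S), (none : Option T)))).map
            (Function.Embedding.subtype _), u x :=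
          (Finset.prod_map (Ramb.subtype (fun p => p ≠ ((none : Option S), (none : Option T))))
            (Function.Embedding.subtype _) u).symm
      _ = ∏ x ∈ Ramb, u x := by rw [Finset.subtype_map, hfil]
  -- the explicit transversal
  let A : Finset (Option S × Option T) := RS.image (fun s => (some s, none))
  let B : Finset (Option S × Option T) := RT.image (fun t => (none, some t))
  let C : Finset (Option S × Option T) :=
    (RS ×ˢ (Finset.univ : Finset T)).image (fun q => (some q.1, some q.2))
  let R2 : Finset (Option S × Option T) := A ∪ B ∪ C
  have hmem2 : ∀ q : Option S × Option T, q ∈ R2 ↔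
      ((∃ s ∈ RS, q = (some s, none)) ∨ (∃ t ∈ RT, q = (none, some t)) ∨
        (∃ s ∈ RS, ∃ t : T, q = (some s, some t))) := by
    intro q
    simp only [R2, A, B, C, Finset.mem_union, Finset.mem_image, Finset.mem_product,
      Finset.mem_univ, and_true, Prod.exists]
    constructor
    · rintro ((⟨s, hs, rfl⟩ | ⟨t, ht, rfl⟩) | ⟨s, t, hs, rfl⟩)
      · exact Or.inl ⟨s, hs, rfl⟩
      · exact Or.inr (Or.inl ⟨t, ht, rfl⟩)
      · exact Or.inr (Or.inr ⟨s, hs, t, rfl⟩)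
    · rintro (⟨s, hs, rfl⟩ | ⟨t, ht, rfl⟩ | ⟨s, hs, t, rfl⟩)
      · exact Or.inl (Or.inl ⟨s, hs, rfl⟩)
      · exact Or.inl (Or.inr ⟨t, ht, rfl⟩)
      · exact Or.inr ⟨s, t, hs, rfl⟩
  have hbase2 : ((none : Option S), (none : Option T)) ∉ R2 := by
    rw [hmem2]
    rintro (⟨s, -, h⟩ | ⟨t, -, h⟩ | ⟨s, -, t, h⟩) <;> simp at h
  -- R2 is a transversal
  have h2tr : ∀ p : Option S × Option T, p ≠ (none, none) →
      ∃! gp : G × (Option S × Option T), gp.2 ∈ R2 ∧ p = optionSMul gp.1 gp.2 := by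
    rintro ⟨a, b⟩ hp
    match a, b with
    | none, none => exact absurd rfl hp
    | some s, none =>
      obtain ⟨⟨g, s0⟩, ⟨hs0, hs⟩, huniq⟩ := hRS s
      refine ⟨(g, (some s0, none)), ⟨(hmem2 _).mpr (Or.inl ⟨s0, hs0, rfl⟩), ?_⟩, ?_⟩
      · show ((some s : Option S), (none : Option T)) = (some (g • s0), none)
        rw [hs]
      · rintro ⟨g', q'⟩ ⟨hq', heq⟩
        obtain ⟨s0', hs0', rfl⟩ | ⟨t', -, rfl⟩ | ⟨s', -, t', rfl⟩ := (hmem2 q').mp hq'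
        · simp only [optionSMul, Option.map_some, Option.map_none, Prod.mk.injEq,
            Option.some.injEq, and_true] at heq
          have h0 := huniq (g', s0') ⟨hs0', heq⟩
          have h1 : g' = g := congrArg Prod.fst h0
          have h2 : s0' = s0 := congrArg Prod.snd h0
          rw [h1, h2]
        · simp [optionSMul] at heq
        · simp [optionSMul] at heq
    | none, some t =>
      obtain ⟨⟨g, t0⟩, ⟨ht0, ht⟩, huniq⟩ := hRT t
      refine ⟨(g, (none, some t0)), ⟨(hmem2 _).mpr (Or.inr (Or.inl ⟨t0, ht0, rfl⟩)), ?_⟩, ?_⟩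
      · show ((none : Option S), (some t : Option T)) = (none, some (g • t0))
        rw [ht]
      · rintro ⟨g', q'⟩ ⟨hq', heq⟩
        obtain ⟨s0', -, rfl⟩ | ⟨t', ht', rfl⟩ | ⟨s', -, t', rfl⟩ := (hmem2 q').mp hq'
        · simp [optionSMul] at heq
        · simp only [optionSMul, Option.map_some, Option.map_none, Prod.mk.injEq,
            Option.some.injEq, true_and] at heq
          have h0 := huniq (g', t') ⟨ht', heq⟩
          have h1 : g' = g := congrArg Prod.fst h0
          have h2 : t' = t0 := congrArg Prod.snd h0
          rw [h1, h2]
        · simp [optionSMul] at heq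
    | some s, some t =>
      obtain ⟨⟨g, s0⟩, ⟨hs0, hs⟩, huniq⟩ := hRS s
      refine ⟨(g, (some s0, some (g⁻¹ • t))),
        ⟨(hmem2 _).mpr (Or.inr (Or.inr ⟨s0, hs0, g⁻¹ • t, rfl⟩)), ?_⟩, ?_⟩
      · show ((some s : Option S), (some t : Option T)) = (some (g • s0), some (g • g⁻¹ • t))
        rw [smul_inv_smul, ← hs]
      · rintro ⟨g', q'⟩ ⟨hq', heq⟩
        obtain ⟨s0', -, rfl⟩ | ⟨t', -, rfl⟩ | ⟨s', hs', t', rfl⟩ := (hmem2 q').mp hq'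
        · simp [optionSMul] at heq
        · simp [optionSMul] at heq
        · simp only [optionSMul, Option.map_some, Prod.mk.injEq, Option.some.injEq] at heq
          have h0 := huniq (g', s') ⟨hs', heq.1⟩
          have hg : g' = g := congrArg Prod.fst h0
          have hss : s' = s0 := congrArg Prod.snd h0
          subst hg; subst hss
          have ht' : t' = g'⁻¹ • t := by rw [heq.2, inv_smul_smul]
          rw [ht']
  -- the explicit cocycle on R2
  let c2 : Option S × Option T → G := fun p => p.1.elim 1 cS
  let ρ2 : Option S × Option T → Option S × Option T := fun p =>
    p.1.elim (none, p.2) (fun s => (some (ρS s), p.2.map ((cS s)⁻¹ • ·)))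
  have hc2 : ∀ x ∈ R2, ρ2 x ∈ R2 ∧ optionFst f x = optionSMul (c2 x) (ρ2 x) := by
    intro x hx
    obtain ⟨s, hs, rfl⟩ | ⟨t, ht, rfl⟩ | ⟨s, hs, t, rfl⟩ := (hmem2 x).mp hx
    · refine ⟨(hmem2 _).mpr (Or.inl ⟨ρS s, (hcρS s hs).1, rfl⟩), ?_⟩
      show ((some (f s) : Option S), (none : Option T)) = (some (cS s • ρS s), none)
      rw [(hcρS s hs).2]
    · refine ⟨hx, ?_⟩
      show ((none : Option S), (some t : Option T)) = (none, some ((1 : G) • t))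
      rw [one_smul]
    · refine ⟨(hmem2 _).mpr (Or.inr (Or.inr ⟨ρS s, (hcρS s hs).1, (cS s)⁻¹ • t, rfl⟩)), ?_⟩
      show ((some (f s) : Option S), (some t : Option T))
          = (some (cS s • ρS s), some (cS s • (cS s)⁻¹ • t))
      rw [smul_inv_smul, (hcρS s hs).2]
  -- apply the abstract lemma
  have main := prod_cocycle_indep sm hsm1 hsmm F hFinj hFeq
    (R.subtype (fun p => p ≠ (none, none))) (R2.subtype (fun p => p ≠ (none, none)))
    (lift_tr R hR) (lift_tr R2 h2tr)
    (fun x => c x.1) (ρlift ρ) (lift_coc R c ρ hcρ hRbase)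
    (fun x => c2 x.1) (ρlift ρ2) (lift_coc R2 c2 ρ2 hc2 hbase2)
  -- compute the product over R2
  have hdAB : Disjoint A B := by
    rw [Finset.disjoint_left]
    rintro x hxA hxB
    obtain ⟨s, -, rfl⟩ := Finset.mem_image.mp hxA
    obtain ⟨t, -, h⟩ := Finset.mem_image.mp hxB
    simp at h
  have hdABC : Disjoint (A ∪ B) C := by
    rw [Finset.disjoint_left]
    rintro x hxAB hxC
    obtain ⟨q, -, rfl⟩ := Finset.mem_image.mp hxC
    rcases Finset.mem_union.mp hxAB with h | h
    · obtain ⟨s, -, hh⟩ := Finset.mem_image.mp h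
      simp at hh
    · obtain ⟨t, -, hh⟩ := Finset.mem_image.mp h
      simp at hh
  have hprodA : ∏ x ∈ A, c2 x = ∏ s ∈ RS, cS s := by
    rw [Finset.prod_image (fun a _ b _ h => Option.some_injective S (congrArg Prod.fst h))]
    exact Finset.prod_congr rfl fun s _ => rfl
  have hprodB : ∏ x ∈ B, c2 x = 1 := by
    rw [Finset.prod_image (fun a _ b _ h => Option.some_injective T (congrArg Prod.snd h))]
    exact Finset.prod_eq_one fun t _ => rfl
  have hprodC : ∏ x ∈ C, c2 x = (∏ s ∈ RS, cS s) ^ Fintype.card T := by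
    rw [Finset.prod_image (fun a _ b _ h => Prod.ext
      (Option.some_injective S (congrArg Prod.fst h))
      (Option.some_injective T (congrArg Prod.snd h)))]
    rw [Finset.prod_product]
    simp only [c2, Option.elim]
    rw [← Finset.prod_pow]
    congr 1
    ext s
    rw [Finset.prod_const, Finset.card_univ]
  have hprodR2 : ∏ x ∈ R2, c2 x = ∏ s ∈ RS, cS s := by
    rw [show (R2 : Finset (Option S × Option T)) = A ∪ B ∪ C from rfl,
      Finset.prod_union hdABC, Finset.prod_union hdAB, hprodA, hprodB, hprodC, hpow]
    group
  calc ∏ x ∈ R, c x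
      = ∏ x ∈ R.subtype (fun p => p ≠ ((none : Option S), (none : Option T))), c x.1 :=
        (prod_lift R c hRbase).symm
    _ = ∏ x ∈ R2.subtype (fun p => p ≠ ((none : Option S), (none : Option T))), c2 x.1 := main
    _ = ∏ x ∈ R2, c2 x := prod_lift R2 c2 hbase2
    _ = ∏ x ∈ RS, cS x := hprodR2
end

section
/- Let X be a finite type, let ι : X → X be a fixed-point-free involution (ι ∘ ι = id and ι x ≠ x for all x), and let f be a permutation of X commuting with ι. Let R ⊆ X be a subset containing exactly one element from each pair {x, ι x} (i.e., for every x ∈ X, exactly one of x ∈ R and ι x ∈ R holds). Then the sign of f equals (−1)^N, where N is the number of x ∈ R with f x ∉ R. -/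
/-- let `X` be a finite type, `ι` a fixed-point-free involution of `X`, and `f`
a permutation of `X` commuting with `ι`. If `R` contains exactly one element of each pair
`{x, ι x}`, then `sign f = (-1)^N` where `N` is the number of `x ∈ R` with `f x ∉ R`. -/
theorem sign_eq_neg_one_pow_card {X : Type*} [Fintype X] [DecidableEq X]
    (ι : X → X) (hinv : ∀ x, ι (ι x) = x) (hfp : ∀ x, ι x ≠ x)
    (f : Equiv.Perm X) (hcomm : ∀ x, f (ι x) = ι (f x))
    (R : Finset X) (hR : ∀ x : X, Xor' (x ∈ R) (ι x ∈ R)) :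
    Equiv.Perm.sign f = (-1) ^ (R.filter fun x => f x ∉ R).card := by
  classical
  have hmem : ∀ x : X, x ∉ R → ι x ∈ R := by
    intro x hx
    rcases hR x with ⟨h1, _⟩ | ⟨h1, _⟩
    · exact absurd h1 hx
    · exact h1
  have hnmem : ∀ x : X, x ∈ R → ι x ∉ R := by
    intro x hx
    rcases hR x with ⟨_, h2⟩ | ⟨_, h2⟩
    · exact h2
    · exact absurd hx h2
  set R' := {x : X // x ∈ R} with hR'
  let e : X ≃ R' × Bool :=
    { toFun := fun x =>
        if h : x ∈ R then (⟨x, h⟩, true) else (⟨ι x, hmem x h⟩, false)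
      invFun := fun p => if p.2 then (p.1 : X) else ι (p.1 : X)
      left_inv := by
        intro x
        by_cases h : x ∈ R
        · simp [h]
        · simp [h, hinv]
      right_inv := by
        rintro ⟨r, b⟩
        cases b
        · have : ι (r : X) ∉ R := hnmem r r.2
          simp [this, hinv]
        · simp [r.2] }
  have he_mem : ∀ (x : X) (h : x ∈ R), e x = (⟨x, h⟩, true) := fun x h => dif_pos h
  have he_nmem : ∀ (x : X) (h : x ∉ R), e x = (⟨ι x, hmem x h⟩, false) := fun x h => dif_neg h
  have he_symm_true : ∀ r : R', e.symm (r, true) = (r : X) := fun r => rfl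
  have he_symm_false : ∀ r : R', e.symm (r, false) = ι (r : X) := fun r => rfl
  have hginj : Function.Injective (fun r : R' =>
      (⟨if f (r : X) ∈ R then f (r : X) else ι (f (r : X)), by
        split <;> first | assumption | exact hmem _ (by assumption)⟩ : R')) := by
    intro r1 r2 h
    simp only [Subtype.mk.injEq] at h
    have key : f (r1 : X) = f (r2 : X) ∨ (r1 : X) = ι (r2 : X) ∨ (r2 : X) = ι (r1 : X) := by
      split at h <;> split at h
      · exact Or.inl h
      · right; left
        have h' : f (r1 : X) = f (ι (r2 : X)) := by rw [hcomm]; exact h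
        exact f.injective h'
      · right; right
        have h' : f (r2 : X) = f (ι (r1 : X)) := by rw [hcomm]; exact h.symm
        exact f.injective h'
      · left
        have := congrArg ι h
        rwa [hinv, hinv] at this
    rcases key with h | h | h
    · exact Subtype.ext (f.injective h)
    · exact absurd (h ▸ r1.2) (hnmem _ r2.2)
    · exact absurd (h ▸ r2.2) (hnmem _ r1.2)
  set g : Equiv.Perm R' := Equiv.ofBijective _ (Finite.injective_iff_bijective.mp hginj)
    with hg
  have hg_apply : ∀ r : R', (g r : X) = if f (r : X) ∈ R then f (r : X) else ι (f (r : X)) := by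
    intro r; rfl
  set flip : Equiv.Perm (R' × Bool) :=
    Equiv.prodCongrRight (fun r : R' =>
      if f (r : X) ∉ R then Equiv.swap false true else Equiv.refl Bool) with hflip
  have hdecomp : e.permCongr f = flip.trans (Equiv.prodCongrLeft (fun _ : Bool => g)) := by
    apply Equiv.ext
    rintro ⟨r, b⟩
    have lhs : (e.permCongr f) (r, b) = e (f (e.symm (r, b))) := rfl
    by_cases hfr : f (r : X) ∈ R
    · cases b
      · rw [lhs, he_symm_false, hcomm, he_nmem _ (hnmem _ hfr)]
        simp only [hflip, Equiv.trans_apply, Equiv.prodCongrRight_apply,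
          if_neg (not_not_intro hfr), Equiv.refl_apply, Equiv.prodCongrLeft_apply]
        refine Prod.ext (Subtype.ext ?_) rfl
        rw [hg_apply, if_pos hfr]; exact hinv _
      · rw [lhs, he_symm_true, he_mem _ hfr]
        simp only [hflip, Equiv.trans_apply, Equiv.prodCongrRight_apply,
          if_neg (not_not_intro hfr), Equiv.refl_apply, Equiv.prodCongrLeft_apply]
        refine Prod.ext (Subtype.ext ?_) rfl
        rw [hg_apply, if_pos hfr]
    · cases b
      · rw [lhs, he_symm_false, hcomm, he_mem _ (hmem _ hfr)]
        simp only [hflip, Equiv.trans_apply, Equiv.prodCongrRight_apply,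
          if_pos hfr, Equiv.prodCongrLeft_apply, Equiv.swap_apply_left]
        refine Prod.ext (Subtype.ext ?_) rfl
        rw [hg_apply, if_neg hfr]
      · rw [lhs, he_symm_true, he_nmem _ hfr]
        simp only [hflip, Equiv.trans_apply, Equiv.prodCongrRight_apply,
          if_pos hfr, Equiv.prodCongrLeft_apply, Equiv.swap_apply_right]
        refine Prod.ext (Subtype.ext ?_) rfl
        rw [hg_apply, if_neg hfr]
  have h1 : Equiv.Perm.sign f = Equiv.Perm.sign (e.permCongr f) :=
    (Equiv.Perm.sign_permCongr e f).symm
  rw [h1, hdecomp]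
  have htrans : (flip.trans (Equiv.prodCongrLeft (fun _ : Bool => g))) =
      (Equiv.prodCongrLeft (fun _ : Bool => g)) * flip := rfl
  rw [htrans, map_mul]
  have hsg : Equiv.Perm.sign (Equiv.prodCongrLeft (fun _ : Bool => g)) = 1 := by
    rw [Equiv.Perm.sign_prodCongrLeft, Fintype.prod_bool, Int.units_mul_self]
  have hsf : Equiv.Perm.sign flip = (-1) ^ (R.filter fun x => f x ∉ R).card := by
    rw [hflip, Equiv.Perm.sign_prodCongrRight]
    have hpt : ∀ r : R', Equiv.Perm.sign
        (if f (r : X) ∉ R then Equiv.swap false true else Equiv.refl Bool) =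
        if f (r : X) ∉ R then (-1 : ℤˣ) else 1 := by
      intro r
      split
      · exact Equiv.Perm.sign_swap (by simp)
      · simp
    rw [Finset.prod_congr rfl (fun r _ => hpt r), Finset.prod_ite, Finset.prod_const,
      Finset.prod_const, one_pow, mul_one]
    congr 1
    refine Finset.card_bij (fun r _ => (r : X)) ?_ ?_ ?_
    · intro r hr
      simp only [Finset.mem_filter] at hr ⊢
      exact ⟨r.2, hr.2⟩
    · intro r1 _ r2 _ h
      exact Subtype.ext h
    · intro x hx
      simp only [Finset.mem_filter] at hx
      exact ⟨⟨x, hx.1⟩, by simp [hx.2], rfl⟩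
  rw [hsg, hsf, one_mul]
end

section
/- Let k be a finite field and V a finite-dimensional k-vector space. For each one-dimensional subspace L of V choose a nonzero vector s(L) ∈ L. Let f : V → V be a k-linear automorphism; f maps each one-dimensional subspace L to the one-dimensional subspace f(L). Let c be the function assigning to each one-dimensional subspace L the unique scalar c(L) ∈ k with f(s(L)) = c(L) · s(f(L)). Then the product of c(L) over all one-dimensional subspaces L of V equals det f. -/
namespace LineCocycle
open Finset Module

variable {k V : Type*} [Field k] [AddCommGroup V] [Module k V] [FiniteDimensional k V]

/-- In a 1-dimensional submodule, every element is a scalar multiple of a given nonzero elt. -/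
lemma exists_smul_eq' {W : Submodule k V} (hW : Module.finrank k W = 1)
    {v : V} (hv : v ∈ W) (hv0 : v ≠ 0) {x : V} (hx : x ∈ W) : ∃ a : k, x = a • v := by
  have hle : Submodule.span k {v} ≤ W := Submodule.span_le.2 (by simpa using hv)
  have hsp : Submodule.span k {v} = W := by
    apply Submodule.eq_of_le_of_finrank_le hle
    rw [hW, finrank_span_singleton hv0]
  rw [← hsp] at hx
  exact (Submodule.mem_span_singleton.1 hx).imp fun a ha => ha.symm

lemma exists_ne_zero_mem {W : Submodule k V} (hW : Module.finrank k W = 1) :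
    ∃ v ∈ W, v ≠ 0 := by
  have : W ≠ ⊥ := by
    intro h
    rw [h, finrank_bot] at hW
    exact one_ne_zero hW.symm
  obtain ⟨v, hv, hv0⟩ := Submodule.exists_mem_ne_zero_of_ne_bot this
  exact ⟨v, hv, hv0⟩

end LineCocycle

namespace LineCocycle
set_option linter.unusedSectionVars false

variable {k V : Type*} [Field k] [AddCommGroup V] [Module k V] [FiniteDimensional k V]

open scoped Classical in
/-- a chosen nonzero element of a submodule (junk `0` if none). -/
noncomputable def pick (W : Submodule k V) : V :=
  if h : ∃ v ∈ W, v ≠ 0 then h.choose else 0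

lemma pick_spec {W : Submodule k V} (hW : Module.finrank k W = 1) :
    pick W ∈ W ∧ pick W ≠ 0 := by
  have h := exists_ne_zero_mem hW
  unfold pick
  rw [dif_pos h]
  exact h.choose_spec

variable (L : Finset (Submodule k V))

def Sec (s : Submodule k V → V) : Prop := ∀ W ∈ L, s W ∈ W ∧ s W ≠ 0

def Coc (s : Submodule k V → V) (φ : V →ₗ[k] V) (c : Submodule k V → k) : Prop :=
  ∀ W ∈ L, φ (s W) = c W • s (W.map φ)

variable {L}

lemma map_mem_L (hL : ∀ W : Submodule k V, W ∈ L ↔ Module.finrank k W = 1) (e : V ≃ₗ[k] V) {W : Submodule k V} (hW : W ∈ L) :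
    W.map (e : V →ₗ[k] V) ∈ L := by
  rw [hL] at hW ⊢
  rw [LinearEquiv.finrank_map_eq]
  exact hW

lemma map_symm_map (e : V ≃ₗ[k] V) (W : Submodule k V) :
    (W.map (e : V →ₗ[k] V)).map (e.symm : V →ₗ[k] V) = W := by
  ext x
  simp [Submodule.mem_map]

lemma prod_map_L (hL : ∀ W : Submodule k V, W ∈ L ↔ Module.finrank k W = 1) (e : V ≃ₗ[k] V) (u : Submodule k V → k) :
    ∏ W ∈ L, u (W.map (e : V →ₗ[k] V)) = ∏ W ∈ L, u W := by
  apply Finset.prod_nbij' (i := fun W => W.map (e : V →ₗ[k] V))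
    (j := fun W => W.map (e.symm : V →ₗ[k] V))
  · intro W hW; exact map_mem_L hL e hW
  · intro W hW; exact map_mem_L hL e.symm hW
  · intro W hW; exact map_symm_map e W
  · intro W hW
    have := map_symm_map e.symm W
    simpa using this
  · intro W hW; rfl

end LineCocycle

namespace LineCocycle
set_option linter.unusedSectionVars false

variable {k V : Type*} [Field k] [AddCommGroup V] [Module k V] [FiniteDimensional k V]
variable {L : Finset (Submodule k V)}

lemma exists_coc (hL : ∀ W : Submodule k V, W ∈ L ↔ Module.finrank k W = 1)
    (e : V ≃ₗ[k] V) {s : Submodule k V → V} (hs : Sec L s) :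
    ∃ c : Submodule k V → k, Coc L s (e : V →ₗ[k] V) c := by
  classical
  refine ⟨fun W => if h : ∃ a : k, (e : V →ₗ[k] V) (s W) = a • s (W.map (e : V →ₗ[k] V))
      then h.choose else 0, fun W hW => ?_⟩
  have hWe : W.map (e : V →ₗ[k] V) ∈ L := map_mem_L hL e hW
  have h : ∃ a : k, (e : V →ₗ[k] V) (s W) = a • s (W.map (e : V →ₗ[k] V)) := by
    obtain ⟨hmem, hne⟩ := hs _ hWe
    exact exists_smul_eq' ((hL _).1 hWe) hmem hne
      (Submodule.mem_map_of_mem (hs W hW).1)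
  simp only []
  rw [dif_pos h]
  exact h.choose_spec

lemma prod_coc_unique (hL : ∀ W : Submodule k V, W ∈ L ↔ Module.finrank k W = 1)
    (e : V ≃ₗ[k] V) {s s' : Submodule k V → V} {c c' : Submodule k V → k}
    (hs : Sec L s) (hc : Coc L s (e : V →ₗ[k] V) c)
    (hs' : Sec L s') (hc' : Coc L s' (e : V →ₗ[k] V) c') :
    ∏ W ∈ L, c' W = ∏ W ∈ L, c W := by
  classical
  set u : Submodule k V → k := fun W =>
    if h : ∃ t : k, t ≠ 0 ∧ s' W = t • s W then h.choose else 1 with hu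
  have hu_spec : ∀ W ∈ L, u W ≠ 0 ∧ s' W = u W • s W := by
    intro W hW
    have h : ∃ t : k, t ≠ 0 ∧ s' W = t • s W := by
      obtain ⟨t, ht⟩ := exists_smul_eq' ((hL _).1 hW) (hs W hW).1 (hs W hW).2 (hs' W hW).1
      refine ⟨t, fun h0 => (hs' W hW).2 ?_, ht⟩
      rw [ht, h0, zero_smul]
    rw [hu]
    simp only []
    rw [dif_pos h]
    exact h.choose_spec
  have key : ∀ W ∈ L, c' W * u (W.map (e : V →ₗ[k] V)) = u W * c W := by
    intro W hW
    have hWe : W.map (e : V →ₗ[k] V) ∈ L := map_mem_L hL e hW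
    have h1 : (e : V →ₗ[k] V) (s' W) =
        (c' W * u (W.map (e : V →ₗ[k] V))) • s (W.map (e : V →ₗ[k] V)) := by
      rw [hc' W hW, (hu_spec _ hWe).2, smul_smul]
    have h2 : (e : V →ₗ[k] V) (s' W) =
        (u W * c W) • s (W.map (e : V →ₗ[k] V)) := by
      rw [(hu_spec W hW).2, map_smul, hc W hW, smul_smul]
    exact smul_left_injective k (hs _ hWe).2 (h1.symm.trans h2)
  have hprod : (∏ W ∈ L, c' W) * ∏ W ∈ L, u (W.map (e : V →ₗ[k] V)) =
      (∏ W ∈ L, u W) * ∏ W ∈ L, c W := by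
    rw [← Finset.prod_mul_distrib, ← Finset.prod_mul_distrib]
    exact Finset.prod_congr rfl key
  rw [prod_map_L hL e u] at hprod
  have hune : (∏ W ∈ L, u W) ≠ 0 :=
    Finset.prod_ne_zero_iff.2 fun W hW => (hu_spec W hW).1
  rw [mul_comm (∏ W ∈ L, u W)] at hprod
  exact mul_right_cancel₀ hune hprod

end LineCocycle

namespace LineCocycle
set_option linter.unusedSectionVars false

variable {k V : Type*} [Field k] [AddCommGroup V] [Module k V] [FiniteDimensional k V]
variable {L : Finset (Submodule k V)}

/-- The statement we prove for each automorphism. -/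
def Pg (L : Finset (Submodule k V)) (e : V ≃ₗ[k] V) : Prop :=
  ∀ s c, Sec L s → Coc L s (e : V →ₗ[k] V) c →
    ∏ W ∈ L, c W = LinearMap.det (e : V →ₗ[k] V)

lemma Pg_comp (hL : ∀ W : Submodule k V, W ∈ L ↔ Module.finrank k W = 1)
    {e f : V ≃ₗ[k] V} (he : Pg L e) (hf : Pg L f) : Pg L (f.trans e) := by
  intro s c hs hc
  obtain ⟨ce, hce⟩ := exists_coc hL e hs
  obtain ⟨cf, hcf⟩ := exists_coc hL f hs
  have hcoe : ((f.trans e : V ≃ₗ[k] V) : V →ₗ[k] V)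
      = (e : V →ₗ[k] V) ∘ₗ (f : V →ₗ[k] V) := rfl
  have hcoc : Coc L s ((f.trans e : V ≃ₗ[k] V) : V →ₗ[k] V)
      (fun W => ce (W.map (f : V →ₗ[k] V)) * cf W) := by
    intro W hW
    have hWf : W.map (f : V →ₗ[k] V) ∈ L := map_mem_L hL f hW
    have hmap : W.map ((f.trans e : V ≃ₗ[k] V) : V →ₗ[k] V)
        = (W.map (f : V →ₗ[k] V)).map (e : V →ₗ[k] V) := by
      rw [hcoe, Submodule.map_comp]
    rw [hmap]
    calc ((f.trans e : V ≃ₗ[k] V) : V →ₗ[k] V) (s W)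
        = (e : V →ₗ[k] V) ((f : V →ₗ[k] V) (s W)) := rfl
      _ = (e : V →ₗ[k] V) (cf W • s (W.map (f : V →ₗ[k] V))) := by rw [hcf W hW]
      _ = cf W • (e : V →ₗ[k] V) (s (W.map (f : V →ₗ[k] V))) := by rw [map_smul]
      _ = cf W • (ce (W.map (f : V →ₗ[k] V))
            • s ((W.map (f : V →ₗ[k] V)).map (e : V →ₗ[k] V))) := by rw [hce _ hWf]
      _ = (ce (W.map (f : V →ₗ[k] V)) * cf W)
            • s ((W.map (f : V →ₗ[k] V)).map (e : V →ₗ[k] V)) := by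
          rw [smul_smul, mul_comm]
  have h1 : ∏ W ∈ L, c W = ∏ W ∈ L, (ce (W.map (f : V →ₗ[k] V)) * cf W) :=
    prod_coc_unique hL (f.trans e) hs hcoc hs hc
  rw [h1, Finset.prod_mul_distrib, prod_map_L hL f ce, he s ce hs hce, hf s cf hs hcf,
    hcoe, LinearMap.det_comp]

end LineCocycle

namespace LineCocycle
set_option linter.unusedSectionVars false

variable {k : Type*} [Field k] {n : ℕ}

open scoped Classical in
noncomputable def lead [NeZero n] (v : Fin n → k) : Fin n :=
  if h : (Finset.univ.filter fun i => v i ≠ 0).Nonempty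
  then (Finset.univ.filter fun i => v i ≠ 0).min' h else 0

open scoped Classical in
lemma filt_nonempty [NeZero n] {v : Fin n → k} (hv : v ≠ 0) :
    (Finset.univ.filter fun i => v i ≠ 0).Nonempty := by
  obtain ⟨i, hi⟩ := Function.ne_iff.1 hv
  refine ⟨i, by simp; simpa using hi⟩

lemma lead_apply_ne_zero [NeZero n] {v : Fin n → k} (hv : v ≠ 0) : v (lead v) ≠ 0 := by
  classical
  have h := filt_nonempty hv
  have : lead v ∈ Finset.univ.filter fun i => v i ≠ 0 := by
    unfold lead
    rw [dif_pos h]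
    exact Finset.min'_mem _ h
  simpa using this

lemma lead_min [NeZero n] {v : Fin n → k} (hv : v ≠ 0) {j : Fin n} (hj : j < lead v) :
    v j = 0 := by
  classical
  by_contra hj0
  have h := filt_nonempty hv
  have hmem : j ∈ Finset.univ.filter fun i => v i ≠ 0 := by simp [hj0]
  have : lead v ≤ j := by
    unfold lead
    rw [dif_pos h]
    exact Finset.min'_le _ _ hmem
  exact absurd hj (not_lt.2 this)

lemma lead_unique [NeZero n] {v : Fin n → k} {i : Fin n} (hi : v i ≠ 0)
    (hmin : ∀ j, j < i → v j = 0) : lead v = i := by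
  have hv : v ≠ 0 := fun h => hi (by rw [h]; rfl)
  rcases lt_trichotomy (lead v) i with h | h | h
  · exact absurd (hmin _ h) (lead_apply_ne_zero hv)
  · exact h
  · exact absurd (lead_min hv h) hi

lemma lead_smul [NeZero n] {v : Fin n → k} (hv : v ≠ 0) {t : k} (ht : t ≠ 0) :
    lead (t • v) = lead v := by
  apply lead_unique
  · simp only [Pi.smul_apply, smul_eq_mul]
    exact mul_ne_zero ht (lead_apply_ne_zero hv)
  · intro j hj
    simp only [Pi.smul_apply, smul_eq_mul, lead_min hv hj, mul_zero]

noncomputable def nrm [NeZero n] (v : Fin n → k) : Fin n → k := (v (lead v))⁻¹ • v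

lemma nrm_lead_one [NeZero n] {v : Fin n → k} (hv : v ≠ 0) : nrm v (lead v) = 1 := by
  simp [nrm, inv_mul_cancel₀ (lead_apply_ne_zero hv)]

lemma nrm_smul [NeZero n] {v : Fin n → k} (hv : v ≠ 0) {t : k} (ht : t ≠ 0) :
    nrm (t • v) = nrm v := by
  have ha : v (lead v) ≠ 0 := lead_apply_ne_zero hv
  funext i
  simp only [nrm, lead_smul hv ht, Pi.smul_apply, smul_eq_mul]
  field_simp

lemma nrm_eq_self [NeZero n] {v : Fin n → k} (hv : v (lead v) = 1) : nrm v = v := by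
  rw [nrm, hv, inv_one, one_smul]

lemma nrm_ne_zero [NeZero n] {v : Fin n → k} (hv : v ≠ 0) : nrm v ≠ 0 := fun h => by
  have := nrm_lead_one hv
  rw [h] at this
  simp at this

lemma lead_nrm [NeZero n] {v : Fin n → k} (hv : v ≠ 0) : lead (nrm v) = lead v := by
  exact lead_smul hv (inv_ne_zero (lead_apply_ne_zero hv))

end LineCocycle

namespace LineCocycle
set_option linter.unusedSectionVars false

variable {k : Type*} [Field k] {n : ℕ} [NeZero n]

/-- canonical normalized representative of a line in `Fin n → k` -/
noncomputable def sD (W : Submodule k (Fin n → k)) : Fin n → k := nrm (pick W)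

noncomputable def leadW (W : Submodule k (Fin n → k)) : Fin n := lead (pick W)

lemma line_rep {W : Submodule k (Fin n → k)} (hW : Module.finrank k W = 1)
    {v : Fin n → k} (hv : v ∈ W) (hv0 : v ≠ 0) :
    nrm v = sD W ∧ lead v = leadW W := by
  obtain ⟨hpm, hp0⟩ := pick_spec hW
  obtain ⟨a, ha⟩ := exists_smul_eq' hW hpm hp0 hv
  have ha0 : a ≠ 0 := by
    rintro rfl
    rw [zero_smul] at ha
    exact hv0 ha
  subst ha
  exact ⟨nrm_smul hp0 ha0, lead_smul hp0 ha0⟩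

lemma sD_mem {W : Submodule k (Fin n → k)} (hW : Module.finrank k W = 1) :
    sD W ∈ W ∧ sD W ≠ 0 := by
  obtain ⟨hpm, hp0⟩ := pick_spec hW
  exact ⟨Submodule.smul_mem _ _ hpm, nrm_ne_zero hp0⟩

lemma sD_leadW {W : Submodule k (Fin n → k)} (hW : Module.finrank k W = 1) :
    lead (sD W) = leadW W ∧ sD W (leadW W) = 1 := by
  obtain ⟨hpm, hp0⟩ := pick_spec hW
  have h1 : lead (sD W) = leadW W := lead_nrm hp0
  have h2 : sD W (leadW W) = 1 := nrm_lead_one hp0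
  exact ⟨h1, h2⟩

lemma span_sD {W : Submodule k (Fin n → k)} (hW : Module.finrank k W = 1) :
    Submodule.span k {sD W} = W := by
  obtain ⟨hm, h0⟩ := sD_mem hW
  apply Submodule.eq_of_le_of_finrank_le (Submodule.span_le.2 (by simpa using hm))
  rw [hW, finrank_span_singleton h0]

lemma sD_eq_of_norm {v : Fin n → k} {i : Fin n} (hv1 : v i = 1)
    (hmin : ∀ j, j < i → v j = 0) :
    sD (Submodule.span k {v}) = v ∧ leadW (Submodule.span k {v}) = i := by
  have hv0 : v ≠ 0 := fun h => by rw [h] at hv1; simpa using hv1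
  have hfr : Module.finrank k (Submodule.span k {v}) = 1 := finrank_span_singleton hv0
  have hlead : lead v = i := lead_unique (by rw [hv1]; exact one_ne_zero) hmin
  obtain ⟨h1, h2⟩ := line_rep hfr (Submodule.mem_span_singleton_self v) hv0
  refine ⟨?_, by rw [← h2, hlead]⟩
  rw [← h1, nrm_eq_self (by rw [hlead, hv1])]

end LineCocycle

namespace LineCocycle
set_option linter.unusedSectionVars false
open Finset Module

variable {k : Type*} [Field k] [Fintype k] {n : ℕ}

open scoped Classical in
lemma card_fiber [NeZero n] {L : Finset (Submodule k (Fin n → k))}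
    (hL : ∀ W : Submodule k (Fin n → k), W ∈ L ↔ Module.finrank k W = 1) (i : Fin n) :
    (L.filter fun W => leadW W = i).card
      = (Fintype.card k) ^ (Fintype.card {j : Fin n // i < j}) := by
  have h1 : (L.filter fun W => leadW W = i).card
      = (Finset.univ.filter fun v : Fin n → k =>
          v i = 1 ∧ ∀ j, j < i → v j = 0).card := by
    apply Finset.card_nbij' (i := fun W => sD W) (j := fun v => Submodule.span k {v})
    · intro W hW
      rw [Finset.mem_coe, Finset.mem_filter] at hW
      obtain ⟨hWL, hlead⟩ := hW
      have hW1 := (hL W).1 hWL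
      obtain ⟨hl, h1⟩ := sD_leadW hW1
      simp only [Finset.mem_coe, Finset.mem_filter, Finset.mem_univ, true_and]
      refine ⟨by rw [← hlead]; exact h1, fun j hj => ?_⟩
      exact lead_min (sD_mem hW1).2 (by rw [hl, hlead]; exact hj)
    · intro v hv
      rw [Finset.mem_coe, Finset.mem_filter] at hv
      obtain ⟨-, hv1, hmin⟩ := hv
      obtain ⟨h1, h2⟩ := sD_eq_of_norm hv1 hmin
      have hv0 : v ≠ 0 := fun h => by rw [h] at hv1; simpa using hv1
      rw [Finset.mem_coe, Finset.mem_filter]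
      exact ⟨(hL _).2 (finrank_span_singleton hv0), h2⟩
    · intro W hW
      rw [Finset.mem_coe, Finset.mem_filter] at hW
      exact span_sD ((hL W).1 hW.1)
    · intro v hv
      rw [Finset.mem_coe, Finset.mem_filter] at hv
      exact (sD_eq_of_norm hv.2.1 hv.2.2).1
  rw [h1, ← Fintype.card_subtype]
  have e : {v : Fin n → k // v i = 1 ∧ ∀ j, j < i → v j = 0} ≃ ({j : Fin n // i < j} → k) := by
    refine { toFun := fun v j => v.1 j.1,
             invFun := fun g => ⟨fun j => if h : i < j then g ⟨j, h⟩
               else if j = i then 1 else 0, ?_, ?_⟩,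
             left_inv := ?_, right_inv := ?_ }
    · simp
    · intro j hj
      have h1 : ¬ i < j := fun h => absurd hj (not_lt.2 h.le)
      have h2 : j ≠ i := fun h => absurd hj (h ▸ lt_irrefl i)
      simp [h1, h2]
    · rintro ⟨v, hv1, hmin⟩
      apply Subtype.ext
      funext j
      simp only []
      by_cases h : i < j
      · simp [h]
      · by_cases h2 : j = i
        · subst h2; simp [h, hv1]
        · have : j < i := lt_of_le_of_ne (not_lt.1 h) h2
          simp [h, h2, hmin j this]
    · intro g
      funext j
      simp [j.2]
  rw [Fintype.card_congr e, Fintype.card_fun]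

end LineCocycle

namespace LineCocycle
set_option linter.unusedSectionVars false
open Finset Module

variable {k : Type*} [Field k] [Fintype k] {n : ℕ}

theorem Pg_diag {L : Finset (Submodule k (Fin n → k))}
    (hL : ∀ W : Submodule k (Fin n → k), W ∈ L ↔ Module.finrank k W = 1)
    (D : Fin n → k) (hdet : Matrix.det (Matrix.diagonal D) ≠ 0)
    (g : (Fin n → k) ≃ₗ[k] (Fin n → k))
    (hg : (g : (Fin n → k) →ₗ[k] (Fin n → k)) = Matrix.toLin' (Matrix.diagonal D)) :
    Pg L g := by
  intro s c hs hc
  rcases isEmpty_or_nonempty (Fin n) with hemp | hne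
  · haveI : Subsingleton (Fin n → k) := ⟨fun a b => funext fun x => (IsEmpty.false x).elim⟩
    have hLemp : L = ∅ := by
      apply Finset.eq_empty_of_forall_notMem
      intro W hW
      have h1 := (hL W).1 hW
      have h2 : Module.finrank k W ≤ Module.finrank k (Fin n → k) := W.finrank_le
      have h3 : Module.finrank k (Fin n → k) = 0 := Module.finrank_zero_of_subsingleton
      omega
    rw [hLemp, Finset.prod_empty, hg, LinearMap.det_toLin', Matrix.det_isEmpty]
  · haveI : NeZero n := ⟨(Fin.pos_iff_nonempty.2 hne).ne'⟩
    have hD : ∀ i, D i ≠ 0 := by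
      rw [Matrix.det_diagonal] at hdet
      exact fun i => Finset.prod_ne_zero_iff.1 hdet i (Finset.mem_univ i)
    have happ : ∀ (v : Fin n → k) (i : Fin n),
        (g : (Fin n → k) →ₗ[k] (Fin n → k)) v i = D i * v i := by
      intro v i
      rw [hg, Matrix.toLin'_apply, Matrix.mulVec_diagonal]
    have hsD : Sec L sD := fun W hW => sD_mem ((hL W).1 hW)
    have hcD : Coc L sD (g : (Fin n → k) →ₗ[k] (Fin n → k)) (fun W => D (leadW W)) := by
      intro W hW
      have hW1 := (hL W).1 hW
      obtain ⟨hvm, hv0⟩ := sD_mem hW1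
      obtain ⟨hlv, hv1⟩ := sD_leadW hW1
      set φ := (g : (Fin n → k) →ₗ[k] (Fin n → k)) with hφ
      have hWφ : W.map φ ∈ L := map_mem_L hL g hW
      have himg : φ (sD W) ∈ W.map φ := Submodule.mem_map_of_mem hvm
      have hgvl : φ (sD W) (leadW W) = D (leadW W) := by
        rw [happ, hv1, mul_one]
      have hgv0 : φ (sD W) ≠ 0 := by
        intro h
        rw [h] at hgvl
        exact hD _ (by simpa using hgvl.symm)
      have hlead_gv : lead (φ (sD W)) = leadW W := by
        apply lead_unique
        · rw [hgvl]; exact hD _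
        · intro j hj
          rw [happ]
          have : sD W j = 0 := lead_min hv0 (by rw [hlv]; exact hj)
          rw [this, mul_zero]
      obtain ⟨hrep, hleq⟩ := line_rep ((hL _).1 hWφ) himg hgv0
      have : sD (W.map φ) = (D (leadW W))⁻¹ • φ (sD W) := by
        rw [← hrep, nrm, hlead_gv, hgvl]
      rw [this, smul_smul, mul_inv_cancel₀ (hD _), one_smul]
    have h1 : ∏ W ∈ L, c W = ∏ W ∈ L, D (leadW W) :=
      prod_coc_unique hL g hsD hcD hs hc
    rw [h1, hg, LinearMap.det_toLin', Matrix.det_diagonal]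
    rw [← Finset.prod_fiberwise L (fun W => leadW W) (fun W => D (leadW W))]
    apply Finset.prod_congr rfl
    intro i _
    have hconst : ∏ W ∈ L.filter fun W => leadW W = i, D (leadW W)
        = (D i) ^ (L.filter fun W => leadW W = i).card := by
      rw [Finset.prod_congr rfl fun W hW => by
        rw [(Finset.mem_filter.1 hW).2]]
      exact Finset.prod_const _
    rw [hconst, card_fiber hL i, FiniteField.pow_card_pow]
end LineCocycle

namespace LineCocycle
set_option linter.unusedSectionVars false
open Finset Module

variable {k : Type*} [Field k] [Fintype k] {n : ℕ}

lemma transvec_mulVec (i j : Fin n) (tc : k) (v : Fin n → k) (a : Fin n) :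
    (Matrix.transvection i j tc).mulVec v a = v a + if a = i then tc * v j else 0 := by
  classical
  simp only [Matrix.transvection, Matrix.add_mulVec, Matrix.one_mulVec, Pi.add_apply]
  congr 1
  rcases eq_or_ne a i with rfl | h
  · simp [Matrix.mulVec, Matrix.single, dotProduct, ite_and, ite_mul,
      Finset.sum_ite_eq]
  · simp [Matrix.mulVec, Matrix.single, dotProduct, ite_and, ite_mul, h,
      Finset.sum_ite_eq]
    exact fun hia => absurd hia.symm h

open scoped Classical in
noncomputable def sT (j : Fin n) (W : Submodule k (Fin n → k)) : Fin n → k :=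
  if (pick W) j = 0 then pick W else ((pick W) j)⁻¹ • pick W

theorem Pg_transvec {L : Finset (Submodule k (Fin n → k))}
    (hL : ∀ W : Submodule k (Fin n → k), W ∈ L ↔ Module.finrank k W = 1)
    (t : Matrix.TransvectionStruct (Fin n) k)
    (g : (Fin n → k) ≃ₗ[k] (Fin n → k))
    (hg : (g : (Fin n → k) →ₗ[k] (Fin n → k)) = Matrix.toLin' t.toMatrix) :
    Pg L g := by
  obtain ⟨i, j, hij, tc⟩ := t
  intro s c hs hc
  have happ : ∀ (v : Fin n → k) (a : Fin n),
      ((g : (Fin n → k) →ₗ[k] (Fin n → k))) v a = v a + if a = i then tc * v j else 0 := by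
    intro v a
    rw [hg, Matrix.toLin'_apply]
    exact transvec_mulVec i j tc v a
  have hA : ∀ v : Fin n → k, v j = 0 → ((g : (Fin n → k) →ₗ[k] (Fin n → k))) v = v := by
    intro v hv
    funext a
    rw [happ, hv]
    split <;> simp
  have hB : ∀ v : Fin n → k, ((g : (Fin n → k) →ₗ[k] (Fin n → k))) v j = v j := by
    intro v
    rw [happ]
    simp [hij.symm]
  have hsT : Sec L (sT j) := by
    intro W hW
    obtain ⟨hpm, hp0⟩ := pick_spec ((hL W).1 hW)
    unfold sT
    split
    · exact ⟨hpm, hp0⟩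
    · next h =>
      exact ⟨Submodule.smul_mem _ _ hpm, smul_ne_zero (inv_ne_zero h) hp0⟩
  have hcT : Coc L (sT j) ((g : (Fin n → k) →ₗ[k] (Fin n → k))) (fun _ => 1) := by
    intro W hW
    have hW1 := (hL W).1 hW
    obtain ⟨hpm, hp0⟩ := pick_spec hW1
    rw [one_smul]
    by_cases hpj : (pick W) j = 0
    · -- W is fixed pointwise
      have hWfix : ∀ x ∈ W, ((g : (Fin n → k) →ₗ[k] (Fin n → k))) x = x := by
        intro x hx
        obtain ⟨a, rfl⟩ := exists_smul_eq' hW1 hpm hp0 hx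
        apply hA
        simp [hpj]
      have hmap : W.map ((g : (Fin n → k) →ₗ[k] (Fin n → k))) = W := by
        apply le_antisymm
        · rintro x ⟨y, hy, rfl⟩
          rw [hWfix y hy]
          exact hy
        · intro x hx
          exact ⟨x, hx, hWfix x hx⟩
      rw [hmap]
      exact hWfix _ (hsT W hW).1
    · have hv : sT j W = ((pick W) j)⁻¹ • pick W := by
        unfold sT
        rw [if_neg hpj]
      have hvj : (sT j W) j = 1 := by
        rw [hv]
        simp [inv_mul_cancel₀ hpj]
      have hvm : sT j W ∈ W := (hsT W hW).1
      have hv0 : sT j W ≠ 0 := (hsT W hW).2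
      have hφv0 : ((g : (Fin n → k) →ₗ[k] (Fin n → k))) (sT j W) ≠ 0 := by
        intro h
        have := hB (sT j W)
        rw [h, hvj] at this
        simpa using this.symm
      have hWφ : W.map ((g : (Fin n → k) →ₗ[k] (Fin n → k))) ∈ L := map_mem_L hL g hW
      have hW1' := (hL _).1 hWφ
      obtain ⟨hqm, hq0⟩ := pick_spec hW1'
      obtain ⟨a, ha⟩ := exists_smul_eq' hW1' (Submodule.mem_map_of_mem hvm) hφv0 hqm
      have ha0 : a ≠ 0 := by
        rintro rfl
        rw [zero_smul] at ha
        exact hq0 ha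
      have hqj : (pick (W.map ((g : (Fin n → k) →ₗ[k] (Fin n → k))))) j = a := by
        rw [ha]
        simp only [Pi.smul_apply, smul_eq_mul]
        rw [hB, hvj, mul_one]
      have hqj0 : (pick (W.map ((g : (Fin n → k) →ₗ[k] (Fin n → k))))) j ≠ 0 := by rw [hqj]; exact ha0
      unfold sT
      rw [if_neg hqj0, hqj, ha, smul_smul, inv_mul_cancel₀ ha0, one_smul, if_neg hpj, ← hv]
  have h1 : ∏ W ∈ L, c W = ∏ W ∈ L, (1 : k) :=
    prod_coc_unique hL g hsT hcT hs hc
  rw [h1, Finset.prod_const_one, hg, LinearMap.det_toLin']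
  rw [Matrix.TransvectionStruct.det]
end LineCocycle

namespace LineCocycle
set_option linter.unusedSectionVars false
open Finset Module

section
variable {k V : Type*} [Field k] [AddCommGroup V] [Module k V] [FiniteDimensional k V]
variable {L : Finset (Submodule k V)}

lemma Pg_congr {g g' : V ≃ₗ[k] V} (h : (g : V →ₗ[k] V) = (g' : V →ₗ[k] V))
    (hg : Pg L g) : Pg L g' := by
  intro s c hs hc
  rw [← h] at hc
  rw [← h]
  exact hg s c hs hc

end

variable {k : Type*} [Field k] [Fintype k] {n : ℕ}

theorem Pg_all {L : Finset (Submodule k (Fin n → k))}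
    (hL : ∀ W : Submodule k (Fin n → k), W ∈ L ↔ Module.finrank k W = 1)
    (g : (Fin n → k) ≃ₗ[k] (Fin n → k)) : Pg L g := by
  have hdet : Matrix.det (LinearMap.toMatrix' (g : (Fin n → k) →ₗ[k] (Fin n → k))) ≠ 0 := by
    rw [LinearMap.det_toMatrix']
    exact (LinearEquiv.isUnit_det' g).ne_zero
  have hP : ∀ M : Matrix (Fin n) (Fin n) k, Matrix.det M ≠ 0 →
      (∀ (g' : (Fin n → k) ≃ₗ[k] (Fin n → k)),
        (g' : (Fin n → k) →ₗ[k] (Fin n → k)) = Matrix.toLin' M → Pg L g') → True := fun _ _ _ => trivial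
  clear hP
  have key : ∀ (g' : (Fin n → k) ≃ₗ[k] (Fin n → k)),
      (g' : (Fin n → k) →ₗ[k] (Fin n → k))
        = Matrix.toLin' (LinearMap.toMatrix' (g : (Fin n → k) →ₗ[k] (Fin n → k))) → Pg L g' := by
    apply Matrix.diagonal_transvection_induction_of_det_ne_zero
      (P := fun M => ∀ (g' : (Fin n → k) ≃ₗ[k] (Fin n → k)),
        (g' : (Fin n → k) →ₗ[k] (Fin n → k)) = Matrix.toLin' M → Pg L g')
      _ hdet
    · intro D hD g' hg'
      exact Pg_diag hL D hD g' hg'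
    · intro t g' hg'
      exact Pg_transvec hL t g' hg'
    · intro A B hA hB PA PB g' hg'
      let gA := Matrix.toLinearEquiv' A (A.invertibleOfIsUnitDet (Ne.isUnit hA))
      let gB := Matrix.toLinearEquiv' B (B.invertibleOfIsUnitDet (Ne.isUnit hB))
      have hgA : (gA : (Fin n → k) →ₗ[k] (Fin n → k)) = Matrix.toLin' A := rfl
      have hgB : (gB : (Fin n → k) →ₗ[k] (Fin n → k)) = Matrix.toLin' B := rfl
      have hPg : Pg L (gB.trans gA) := Pg_comp hL (PA gA hgA) (PB gB hgB)
      apply Pg_congr (g := gB.trans gA) _ hPg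
      rw [hg', Matrix.toLin'_mul, ← hgA, ← hgB]
      rfl
  exact key g (by rw [Matrix.toLin'_toMatrix'])

end LineCocycle

namespace LineCocycle
set_option linter.unusedSectionVars false

lemma map_map_symm {k V V₂ : Type*} [Field k] [AddCommGroup V] [Module k V]
    [AddCommGroup V₂] [Module k V₂] (e : V ≃ₗ[k] V₂) (W : Submodule k V) :
    (W.map (e : V →ₗ[k] V₂)).map (e.symm : V₂ →ₗ[k] V) = W := by
  ext x
  simp

lemma map_symm_map' {k V V₂ : Type*} [Field k] [AddCommGroup V] [Module k V]
    [AddCommGroup V₂] [Module k V₂] (e : V ≃ₗ[k] V₂) (M : Submodule k V₂) :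
    (M.map (e.symm : V₂ →ₗ[k] V)).map (e : V →ₗ[k] V₂) = M := by
  ext x
  constructor
  · rintro ⟨y, ⟨z, hz, rfl⟩, rfl⟩
    simpa using hz
  · intro hx
    exact ⟨e.symm x, ⟨x, hx, rfl⟩, by simp⟩

end LineCocycle

open LineCocycle in
/-- let `k` be a finite field and `V` a finite-dimensional `k`-vector space.
Choose a nonzero vector `s L` on each line (one-dimensional subspace) `L` of `V`. Let
`f : V ≃ₗ[k] V` and let `c L ∈ k` be the unique scalar with `f (s L) = c L • s (f L)`, where
`f L` is the image line. Then the product of `c L` over all lines `L` equals `det f`. -/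
theorem prod_line_cocycle_eq_det {k V : Type*} [Field k] [Fintype k]
    [AddCommGroup V] [Module k V] [FiniteDimensional k V]
    (L : Finset (Submodule k V))
    (hL : ∀ W : Submodule k V, W ∈ L ↔ Module.finrank k W = 1)
    (s : Submodule k V → V) (hs : ∀ W ∈ L, s W ∈ W ∧ s W ≠ 0)
    (f : V ≃ₗ[k] V) (c : Submodule k V → k)
    (hc : ∀ W ∈ L, f (s W) = c W • s (W.map (f : V →ₗ[k] V))) :
    ∏ W ∈ L, c W = LinearMap.det (f : V →ₗ[k] V) := by
  classical
  set n := Module.finrank k V with hn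
  let b : Module.Basis (Fin n) k V := Module.finBasis k V
  let e : V ≃ₗ[k] (Fin n → k) := b.equivFun
  let em : V →ₗ[k] (Fin n → k) := (e : V →ₗ[k] (Fin n → k))
  let ems : (Fin n → k) →ₗ[k] V := (e.symm : (Fin n → k) →ₗ[k] V)
  let L₀ : Finset (Submodule k (Fin n → k)) := L.image (fun W => W.map em)
  have hL₀ : ∀ M : Submodule k (Fin n → k), M ∈ L₀ ↔ Module.finrank k M = 1 := by
    intro M
    constructor
    · intro hM
      obtain ⟨W, hW, rfl⟩ := Finset.mem_image.1 hM
      rw [LinearEquiv.finrank_map_eq]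
      exact (hL W).1 hW
    · intro hM
      refine Finset.mem_image.2 ⟨M.map ems, ?_, map_symm_map' e M⟩
      rw [hL, LinearEquiv.finrank_map_eq]
      exact hM
  let g₀ : (Fin n → k) ≃ₗ[k] (Fin n → k) := (e.symm.trans f).trans e
  have hg₀coe : (g₀ : (Fin n → k) →ₗ[k] (Fin n → k)) = em ∘ₗ (f : V →ₗ[k] V) ∘ₗ ems := rfl
  let s₀ : Submodule k (Fin n → k) → (Fin n → k) := fun M => e (s (M.map ems))
  let c₀ : Submodule k (Fin n → k) → k := fun M => c (M.map ems)
  have hmem : ∀ M ∈ L₀, M.map ems ∈ L := by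
    intro M hM
    rw [hL, LinearEquiv.finrank_map_eq]
    exact (hL₀ M).1 hM
  have hs₀ : Sec L₀ s₀ := by
    intro M hM
    have hW := hmem M hM
    obtain ⟨h1, h2⟩ := hs _ hW
    constructor
    · have : e (s (M.map ems)) ∈ (M.map ems).map em := Submodule.mem_map_of_mem h1
      rwa [map_symm_map' e M] at this
    · simp only [s₀]
      rw [LinearEquiv.map_ne_zero_iff]
      exact h2
  have hc₀ : Coc L₀ s₀ (g₀ : (Fin n → k) →ₗ[k] (Fin n → k)) c₀ := by
    intro M hM
    have hW := hmem M hM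
    have hmapeq : (M.map (g₀ : (Fin n → k) →ₗ[k] (Fin n → k))).map ems
        = (M.map ems).map (f : V →ₗ[k] V) := by
      rw [hg₀coe]
      rw [Submodule.map_comp, Submodule.map_comp]
      congr 1
      exact map_map_symm e _
    calc (g₀ : (Fin n → k) →ₗ[k] (Fin n → k)) (s₀ M)
        = e (f (e.symm (e (s (M.map ems))))) := rfl
      _ = e (f (s (M.map ems))) := by rw [LinearEquiv.symm_apply_apply]
      _ = e (c (M.map ems) • s ((M.map ems).map (f : V →ₗ[k] V))) := by rw [hc _ hW]
      _ = c₀ M • e (s ((M.map ems).map (f : V →ₗ[k] V))) := by rw [map_smul]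
      _ = c₀ M • s₀ (M.map (g₀ : (Fin n → k) →ₗ[k] (Fin n → k))) := by rw [← hmapeq]
  have hmain := Pg_all hL₀ g₀ s₀ c₀ hs₀ hc₀
  have hdet : LinearMap.det (g₀ : (Fin n → k) →ₗ[k] (Fin n → k))
      = LinearMap.det (f : V →ₗ[k] V) := by
    rw [hg₀coe]
    exact LinearMap.det_conj (f : V →ₗ[k] V) e
  have hprod : ∏ M ∈ L₀, c₀ M = ∏ W ∈ L, c W := by
    rw [Finset.prod_image]
    · apply Finset.prod_congr rfl
      intro W hW
      simp only [c₀]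
      rw [map_map_symm e W]
    · intro W hW W' hW' h
      have := congrArg (fun M => M.map ems) h
      exact (map_map_symm e W).symm.trans (this.trans (map_map_symm e W'))
  rw [← hprod, hmain, hdet]
end

section
/- Let p be a prime and k ≥ 1 an integer, and let A be an additive subgroup of ℚ_p^k. Then A is compact and open (as a subset of ℚ_p^k with the product topology) if and only if A is commensurable with the subgroup ℤ_p^k = {f : Fin k → ℚ_p | ‖f i‖ ≤ 1 for all i}. -/
/-- The additive subgroup `ℤ_p^k = {f : Fin k → ℚ_p | ‖f i‖ ≤ 1 for all i}` of `ℚ_p^k`. -/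
noncomputable def padicIntLattice (p : ℕ) [Fact p.Prime] (k : ℕ) : AddSubgroup (Fin k → ℚ_[p]) where
  carrier := {f | ∀ i, ‖f i‖ ≤ 1}
  zero_mem' := fun i => by simp
  add_mem' {f g} hf hg i :=
    le_trans (Padic.nonarchimedean (f i) (g i)) (max_le (hf i) (hg i))
  neg_mem' {f} hf i := by simpa using hf i

/-- Two additive subgroups `A`, `B` are commensurable if `A/(A ∩ B)` and `B/(A ∩ B)` are
both finite. -/
def AddSubgroupCommensurable {G : Type*} [AddGroup G] (A B : AddSubgroup G) : Prop :=
  Finite ((↥A) ⧸ ((A ⊓ B).addSubgroupOf A)) ∧ Finite ((↥B) ⧸ ((A ⊓ B).addSubgroupOf B))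

/-- for a prime `p`, `k ≥ 1`, and an additive subgroup `A` of `ℚ_p^k`,
`A` is compact and open iff `A` is commensurable with `ℤ_p^k`. -/
theorem compact_open_iff_commensurable (p : ℕ) [Fact p.Prime] (k : ℕ) (hk : 1 ≤ k)
    (A : AddSubgroup (Fin k → ℚ_[p])) :
    (IsCompact (A : Set (Fin k → ℚ_[p])) ∧ IsOpen (A : Set (Fin k → ℚ_[p]))) ↔
      AddSubgroupCommensurable A (padicIntLattice p k) := by
  set L := padicIntLattice p k with hLdef
  have hLset : (L : Set (Fin k → ℚ_[p])) =
      Set.pi Set.univ (fun _ => Metric.closedBall (0 : ℚ_[p]) 1) := by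
    ext f
    simp [hLdef, padicIntLattice, Set.mem_pi, Metric.mem_closedBall, dist_zero_right]
  have hLopen : IsOpen (L : Set (Fin k → ℚ_[p])) := by
    rw [hLset]
    exact isOpen_set_pi Set.finite_univ fun i _ =>
      IsUltrametricDist.isOpen_closedBall _ one_ne_zero
  have hLcompact : IsCompact (L : Set (Fin k → ℚ_[p])) := by
    rw [hLset]
    exact isCompact_univ_pi fun i => isCompact_closedBall _ _
  have hinter : ((A ⊓ L : AddSubgroup (Fin k → ℚ_[p])) : Set (Fin k → ℚ_[p]))
      = (A : Set _) ∩ (L : Set _) := rfl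
  constructor
  · rintro ⟨hAc, hAo⟩
    have hALopen : IsOpen ((A ⊓ L : AddSubgroup (Fin k → ℚ_[p])) : Set (Fin k → ℚ_[p])) := by
      rw [hinter]; exact hAo.inter hLopen
    haveI : CompactSpace ↥A := isCompact_iff_compactSpace.mp hAc
    haveI : CompactSpace ↥L := isCompact_iff_compactSpace.mp hLcompact
    exact ⟨AddSubgroup.quotient_finite_of_isOpen _
        (AddSubgroup.addSubgroupOf_isOpen A (A ⊓ L) hALopen),
      AddSubgroup.quotient_finite_of_isOpen _
        (AddSubgroup.addSubgroupOf_isOpen L (A ⊓ L) hALopen)⟩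
  · rintro ⟨h1, h2⟩
    haveI := h1; haveI := h2
    set H := (A ⊓ L).addSubgroupOf L with hHdef
    haveI : H.FiniteIndex := AddSubgroup.finiteIndex_of_finite_quotient
    set n := H.index with hn
    have hn0 : (n : ℚ_[p]) ≠ 0 := by
      exact_mod_cast (Nat.cast_ne_zero (R := ℚ_[p])).mpr AddSubgroup.FiniteIndex.index_ne_zero
    have key : ∀ x ∈ L, (n : ℚ_[p]) • x ∈ A := by
      intro x hx
      have h := H.nsmul_index_mem (⟨x, hx⟩ : ↥L)
      rw [hHdef, AddSubgroup.mem_addSubgroupOf] at h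
      have : ((n • (⟨x, hx⟩ : ↥L) : ↥L) : Fin k → ℚ_[p]) = (n : ℚ_[p]) • x := by
        push_cast
        rw [Nat.cast_smul_eq_nsmul]
      rw [this] at h
      exact h.1
    -- openness of A
    have hAo : IsOpen (A : Set (Fin k → ℚ_[p])) := by
      set V : Set (Fin k → ℚ_[p]) := (fun y => ((n : ℚ_[p])⁻¹) • y) ⁻¹' (L : Set _) with hV
      have hVopen : IsOpen V := hLopen.preimage (continuous_const_smul _)
      have hVA : V ⊆ (A : Set _) := by
        intro y hy
        have := key _ hy
        rwa [smul_inv_smul₀ hn0] at this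
      have h0V : (0 : Fin k → ℚ_[p]) ∈ V := by
        simp only [hV, Set.mem_preimage, smul_zero]
        exact L.zero_mem
      exact AddSubgroup.isOpen_of_zero_mem_interior A (interior_maximal hVA hVopen h0V)
    have hAclosed : IsClosed (A : Set (Fin k → ℚ_[p])) := AddSubgroup.isClosed_of_isOpen A hAo
    -- compactness via finite coset decomposition
    have hALcompact : IsCompact ((A ⊓ L : AddSubgroup (Fin k → ℚ_[p])) : Set (Fin k → ℚ_[p])) := by
      rw [hinter]
      exact hLcompact.inter_left hAclosed
    set HA := (A ⊓ L).addSubgroupOf A with hHA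
    have hdecomp : (A : Set (Fin k → ℚ_[p])) =
        ⋃ (q : ↥A ⧸ HA), (fun y => ((Quotient.out q : ↥A) : Fin k → ℚ_[p]) + y) ''
          ((A ⊓ L : AddSubgroup (Fin k → ℚ_[p])) : Set (Fin k → ℚ_[p])) := by
      ext a
      constructor
      · intro ha
        refine Set.mem_iUnion.mpr ⟨QuotientAddGroup.mk (⟨a, ha⟩ : ↥A), ?_⟩
        set b : ↥A := Quotient.out (QuotientAddGroup.mk (⟨a, ha⟩ : ↥A)) with hb
        have hbq : QuotientAddGroup.mk (α := ↥A) (s := HA) b = QuotientAddGroup.mk ⟨a, ha⟩ := by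
          rw [hb]; exact Quotient.out_eq _
        have hmem : -b + (⟨a, ha⟩ : ↥A) ∈ HA := (QuotientAddGroup.eq).mp hbq
        rw [hHA, AddSubgroup.mem_addSubgroupOf] at hmem
        refine ⟨-(b : Fin k → ℚ_[p]) + a, ?_, add_neg_cancel_left _ _⟩
        exact hmem
      · intro ha
        obtain ⟨q, y, hy, hya⟩ := Set.mem_iUnion.mp ha
        rw [← hya]
        exact A.add_mem (Quotient.out q).2 hy.1
    rw [hdecomp]
    refine ⟨isCompact_iUnion fun q => hALcompact.image (continuous_add_left _), ?_⟩
    rw [← hdecomp]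
    exact hAo
end

section
/- Let p be a prime and k ≥ 1 an integer, and let A be an additive subgroup of ℚ_p^k. Then A is commensurable with the subgroup ℤ_p^k = {f : Fin k → ℚ_p | ‖f i‖ ≤ 1 for all i} if and only if there exists a ℤ_p-submodule M of ℚ_p^k whose underlying additive subgroup is A and which is a free ℤ_p-module of rank k. -/
open PadicInt

section aux
variable (p : ℕ) [Fact p.Prime] (k : ℕ)

/-- the lattice as a submodule -/
noncomputable def Lsub : Submodule ℤ_[p] (Fin k → ℚ_[p]) where
  carrier := {f | ∀ i, ‖f i‖ ≤ 1}
  zero_mem' := fun i => by simp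
  add_mem' {f g} hf hg i :=
    le_trans (Padic.nonarchimedean (f i) (g i)) (max_le (hf i) (hg i))
  smul_mem' := by
    intro z f hf i
    show ‖(z:ℚ_[p]) * f i‖ ≤ 1
    rw [_root_.norm_mul]
    exact mul_le_one₀ z.norm_le_one (norm_nonneg _) (hf i)

variable {p k}

lemma mem_Lsub_iff {x : Fin k → ℚ_[p]} : x ∈ Lsub p k ↔ ∀ i, ‖x i‖ ≤ 1 := Iff.rfl
lemma mem_lattice_iff {x : Fin k → ℚ_[p]} : x ∈ padicIntLattice p k ↔ ∀ i, ‖x i‖ ≤ 1 := Iff.rfl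

variable (p k)

noncomputable def LsubEquiv : Lsub p k ≃ₗ[ℤ_[p]] (Fin k → ℤ_[p]) where
  toFun x := fun i => ⟨x.1 i, x.2 i⟩
  invFun y := ⟨fun i => (y i : ℚ_[p]), fun i => (y i).2⟩
  left_inv x := rfl
  right_inv y := rfl
  map_add' x y := rfl
  map_smul' z x := rfl

noncomputable def LsubBasis : Module.Basis (Fin k) ℤ_[p] (Lsub p k) :=
  (Pi.basisFun ℤ_[p] (Fin k)).map (LsubEquiv p k).symm

/-- scaling linear map -/
noncomputable def scalemap (c : ℤ_[p]) : (Fin k → ℚ_[p]) →ₗ[ℤ_[p]] (Fin k → ℚ_[p]) where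
  toFun x := c • x
  map_add' := smul_add c
  map_smul' z x := smul_comm c z x

variable {p k}

lemma scalemap_inj {c : ℤ_[p]} (hc : c ≠ 0) : Function.Injective (scalemap p k c) := by
  intro x y h
  funext i
  have h2 : (c:ℚ_[p]) * x i = (c:ℚ_[p]) * y i := congrFun h i
  exact mul_left_cancel₀ (fun h => hc (Subtype.ext h)) h2

/-- in `ℤ_p`, every nonzero element divides a power of `p` -/
lemma exists_pow_eq_mul {x : ℤ_[p]} (hx : x ≠ 0) : ∃ (n : ℕ) (c : ℤ_[p]), (p:ℤ_[p])^n = x * c := by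
  refine ⟨x.valuation, ↑(unitCoeff hx)⁻¹, ?_⟩
  symm
  calc x * ↑(unitCoeff hx)⁻¹ = (↑(unitCoeff hx) * (p:ℤ_[p]) ^ x.valuation) * ↑(unitCoeff hx)⁻¹ := by
        rw [← unitCoeff_spec hx]
    _ = (p:ℤ_[p]) ^ x.valuation * ↑(unitCoeff hx) * ↑(unitCoeff hx)⁻¹ := by ring
    _ = (p:ℤ_[p]) ^ x.valuation := Units.mul_inv_cancel_right _ _

lemma finite_quot {G F : Type*} [AddCommGroup G] [AddGroup F] [Finite F] (φ : G →+ F)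
    (K : AddSubgroup G) (h : φ.ker ≤ K) : Finite (G ⧸ K) := by
  have h1 : Finite (G ⧸ φ.ker) :=
    Finite.of_injective _ (QuotientAddGroup.kerLift_injective φ)
  refine Finite.of_surjective (QuotientAddGroup.map _ _ (AddMonoidHom.id G) h) ?_
  intro x
  obtain ⟨g, rfl⟩ := QuotientAddGroup.mk_surjective x
  exact ⟨QuotientAddGroup.mk g, rfl⟩


variable (p k) in
/-- lattice to integer vectors, as an additive hom -/
noncomputable def latticeHom : ↥(padicIntLattice p k) →+ (Fin k → ℤ_[p]) where
  toFun x := fun i => ⟨x.1 i, x.2 i⟩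
  map_zero' := by
    funext i
    apply PadicInt.ext
    simp
  map_add' x y := by
    funext i
    apply PadicInt.ext
    exact rfl

variable (p k) in
/-- reduction of the lattice mod `p^n` -/
noncomputable def latticeToZMod (n : ℕ) : ↥(padicIntLattice p k) →+ (Fin k → ZMod (p^n)) :=
  (Pi.ringHom (fun i => (PadicInt.toZModPow n).comp (Pi.evalRingHom _ i))).toAddMonoidHom.comp
    (latticeHom p k)

lemma latticeToZMod_ker {n : ℕ} {x : ↥(padicIntLattice p k)} (hx : latticeToZMod p k n x = 0) :
    ∀ i, ‖x.1 i‖ ≤ (p:ℝ)^(-(n:ℤ)) := by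
  intro i
  have h : PadicInt.toZModPow n (latticeHom p k x i) = 0 := congrFun hx i
  have h2 : latticeHom p k x i ∈ Ideal.span {(p:ℤ_[p])^n} := by
    rw [← PadicInt.ker_toZModPow]; exact h
  exact (PadicInt.norm_le_pow_iff_mem_span_pow (latticeHom p k x i) n).2 h2

lemma norm_p_pow_Q (n : ℕ) : ‖((p:ℚ_[p]))^n‖ = (p:ℝ)^(-(n:ℤ)) := by
  rw [_root_.norm_pow, Padic.norm_p, inv_pow, ← zpow_natCast, ← zpow_neg]

/-- main finiteness criterion -/
lemma commensurable_of_pow_smul (M : Submodule ℤ_[p] (Fin k → ℚ_[p])) (N : ℕ)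
    (h1 : ∀ x ∈ padicIntLattice p k, ((p:ℤ_[p])^N : ℤ_[p]) • x ∈ M)
    (h2 : ∀ y ∈ M, ((p:ℤ_[p])^N : ℤ_[p]) • y ∈ padicIntLattice p k) :
    AddSubgroupCommensurable M.toAddSubgroup (padicIntLattice p k) := by
  have hp1 : (1:ℝ) < (p:ℝ) := by exact_mod_cast (Fact.out : p.Prime).one_lt
  have hp0 : (0:ℝ) < (p:ℝ) := lt_trans one_pos hp1
  have hppow : ∀ q : ℚ_[p], ((p:ℤ_[p])^N : ℤ_[p]) • q = ((p:ℚ_[p]))^N * q := by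
    intro q; show ((((p:ℤ_[p])^N : ℤ_[p]) : ℚ_[p])) * q = _; push_cast; ring
  constructor
  · -- A-side
    set A := M.toAddSubgroup
    have hψmem : ∀ a : ↥A, ((p:ℤ_[p])^N : ℤ_[p]) • a.1 ∈ padicIntLattice p k :=
      fun a => h2 a.1 a.2
    set ψ : ↥A →+ ↥(padicIntLattice p k) :=
      { toFun := fun a => ⟨((p:ℤ_[p])^N : ℤ_[p]) • a.1, hψmem a⟩
        map_zero' := by ext : 1; simp
        map_add' := fun a b => by ext : 1; simp [smul_add] } with hψ
    refine finite_quot ((latticeToZMod p k (2*N)).comp ψ) _ (fun a ha => ?_)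
    rw [AddMonoidHom.mem_ker, AddMonoidHom.comp_apply] at ha
    have hcoord := latticeToZMod_ker ha
    rw [AddSubgroup.mem_addSubgroupOf, AddSubgroup.mem_inf]
    refine ⟨a.2, fun i => ?_⟩
    -- ‖a i‖ ≤ p^N * p^(-2N) ≤ 1
    have h3 : ‖((p:ℚ_[p]))^N * a.1 i‖ ≤ (p:ℝ)^(-(2*N:ℕ):ℤ) := by
      have := hcoord i
      rwa [hψ] at this
    rw [_root_.norm_mul, norm_p_pow_Q] at h3
    have h4 : ‖a.1 i‖ ≤ (p:ℝ)^(-(N:ℤ)) := by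
      have e : (p:ℝ)^(-(2*N:ℕ):ℤ) = (p:ℝ)^(-(N:ℤ)) * (p:ℝ)^(-(N:ℤ)) := by
        rw [← zpow_add₀ (ne_of_gt hp0)]; congr 1; push_cast; ring
      rw [e] at h3
      exact le_of_mul_le_mul_left h3 (zpow_pos hp0 _)
    exact le_trans h4 (zpow_le_one_of_nonpos₀ (le_of_lt hp1) (by simp))
  · -- L-side
    refine finite_quot (latticeToZMod p k N) _ (fun x hx => ?_)
    rw [AddMonoidHom.mem_ker] at hx
    have hcoord := latticeToZMod_ker hx
    rw [AddSubgroup.mem_addSubgroupOf, AddSubgroup.mem_inf]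
    refine ⟨?_, x.2⟩
    show x.1 ∈ M
    -- x = p^N • y with y in lattice
    set y : Fin k → ℚ_[p] := (((p:ℚ_[p]))^N)⁻¹ • x.1 with hy
    have hpN : ((p:ℚ_[p]))^N ≠ 0 := by
      apply pow_ne_zero; exact_mod_cast (Fact.out : p.Prime).ne_zero
    have hymem : y ∈ padicIntLattice p k := by
      intro i
      rw [hy]
      show ‖(((p:ℚ_[p]))^N)⁻¹ * x.1 i‖ ≤ 1
      rw [_root_.norm_mul, norm_inv, norm_p_pow_Q]
      calc ((p:ℝ)^(-(N:ℤ)))⁻¹ * ‖x.1 i‖ ≤ ((p:ℝ)^(-(N:ℤ)))⁻¹ * (p:ℝ)^(-(N:ℤ)) := by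
            apply mul_le_mul_of_nonneg_left (hcoord i)
            positivity
        _ = 1 := inv_mul_cancel₀ (by positivity)
    have := h1 y hymem
    have hxy : ((p:ℤ_[p])^N : ℤ_[p]) • y = x.1 := by
      funext i
      have e1 : (((p:ℤ_[p])^N : ℤ_[p]) • y) i = ((p:ℚ_[p]))^N * y i := hppow (y i)
      rw [e1]
      show ((p:ℚ_[p]))^N * ((((p:ℚ_[p]))^N)⁻¹ * x.1 i) = x.1 i
      field_simp
    rwa [hxy] at this

lemma backward_dir (hk : 1 ≤ k) (M : Submodule ℤ_[p] (Fin k → ℚ_[p]))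
    (b : Module.Basis (Fin k) ℤ_[p] M) :
    AddSubgroupCommensurable M.toAddSubgroup (padicIntLattice p k) := by
  haveI : Nonempty (Fin k) := ⟨⟨0, hk⟩⟩
  have hp1 : (1:ℝ) < (p:ℝ) := by exact_mod_cast (Fact.out : p.Prime).one_lt
  set v : Fin k → (Fin k → ℚ_[p]) := fun i => (b i : Fin k → ℚ_[p]) with hv
  -- span of v is M
  have hspan : Submodule.span ℤ_[p] (Set.range v) = M := by
    have h := b.span_eq
    have h2 : Submodule.map M.subtype (Submodule.span ℤ_[p] (Set.range ⇑b)) =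
        Submodule.map M.subtype ⊤ := by rw [h]
    rw [Submodule.map_span, Submodule.map_top, Submodule.range_subtype, ← Set.range_comp] at h2
    exact h2
  -- ℚ_p-linear independence
  have hli : LinearIndependent ℤ_[p] v := b.linearIndependent.map' M.subtype (M.ker_subtype)
  have hliQ : LinearIndependent ℚ_[p] v := hli.localization ℚ_[p] (nonZeroDivisors ℤ_[p])
  have hcard : Fintype.card (Fin k) = Module.finrank ℚ_[p] (Fin k → ℚ_[p]) := by
    simp [Module.finrank_fintype_fun_eq_card]
  set B := basisOfLinearIndependentOfCardEqFinrank hliQ hcard with hB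
  have hBv : ⇑B = v := coe_basisOfLinearIndependentOfCardEqFinrank _ _
  -- denominators: c • (standard basis vector) ∈ M
  obtain ⟨c, hc⟩ := IsLocalization.exist_integer_multiples_of_finite (nonZeroDivisors ℤ_[p])
    (fun ji : Fin k × Fin k => B.repr (Pi.single ji.1 1) ji.2)
  have hc0 : (c:ℤ_[p]) ≠ 0 := nonZeroDivisors.coe_ne_zero c
  have hcE : ∀ j, (c:ℤ_[p]) • (Pi.single j (1:ℚ_[p]) : Fin k → ℚ_[p]) ∈ M := by
    intro j
    have hrepr := B.sum_repr (Pi.single j (1:ℚ_[p]))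
    rw [← hrepr, Finset.smul_sum]
    apply Submodule.sum_mem
    intro i _
    obtain ⟨z, hz⟩ := hc (j, i)
    rw [← smul_assoc]
    have hz' : ((c:ℤ_[p]) • B.repr (Pi.single j 1) i) = algebraMap ℤ_[p] ℚ_[p] z := hz.symm
    rw [hz', algebraMap_smul]
    refine M.smul_mem z ?_
    rw [hBv]
    exact SetLike.coe_mem (b i)
  have hc1 : ∀ x ∈ padicIntLattice p k, (c:ℤ_[p]) • x ∈ M := by
    intro x hx
    obtain ⟨ξ, hξ⟩ : ∃ ξ : Fin k → ℤ_[p], ∀ j, (ξ j : ℚ_[p]) = x j :=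
      ⟨fun j => ⟨x j, hx j⟩, fun j => rfl⟩
    have hxsum : x = ∑ j, ξ j • (Pi.single j (1:ℚ_[p]) : Fin k → ℚ_[p]) := by
      calc x = ∑ j, Pi.single j (x j) := (Finset.univ_sum_single x).symm
        _ = ∑ j, ξ j • (Pi.single j (1:ℚ_[p]) : Fin k → ℚ_[p]) := by
            refine Finset.sum_congr rfl (fun j _ => ?_)
            have h1 : x j = ξ j • (1:ℚ_[p]) := by
              show x j = (ξ j : ℚ_[p]) * 1
              rw [mul_one, hξ j]
            rw [h1, Pi.single_smul]
    rw [hxsum, Finset.smul_sum]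
    refine Submodule.sum_mem _ (fun j _ => ?_)
    rw [smul_comm]
    exact M.smul_mem _ (hcE j)
  -- bound: p^T • M ⊆ lattice
  have hbound : ∀ i j : Fin k, ∃ t:ℕ, ‖v i j‖ ≤ (p:ℝ)^t := by
    intro i j
    obtain ⟨t, ht⟩ := pow_unbounded_of_one_lt (‖v i j‖) hp1
    exact ⟨t, le_of_lt ht⟩
  choose t ht using hbound
  set T := Finset.univ.sup (fun i => Finset.univ.sup (t i)) with hT
  have hTt : ∀ i j, t i j ≤ T := fun i j =>
    le_trans (Finset.le_sup (Finset.mem_univ j))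
      (Finset.le_sup (f := fun i => Finset.univ.sup (t i)) (Finset.mem_univ i))
  have h2 : ∀ y ∈ M, ((p:ℤ_[p])^T : ℤ_[p]) • y ∈ Lsub p k := by
    intro y hy
    have hle : M ≤ Submodule.comap (scalemap p k ((p:ℤ_[p])^T)) (Lsub p k) := by
      rw [← hspan]
      apply Submodule.span_le.2
      rintro _ ⟨i, rfl⟩
      intro j
      show ‖(((p:ℤ_[p])^T : ℤ_[p]) : ℚ_[p]) * v i j‖ ≤ 1
      rw [_root_.norm_mul]
      have : (((p:ℤ_[p])^T : ℤ_[p]) : ℚ_[p]) = ((p:ℚ_[p]))^T := by push_cast; ring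
      rw [this, norm_p_pow_Q]
      calc (p:ℝ)^(-(T:ℤ)) * ‖v i j‖ ≤ (p:ℝ)^(-(T:ℤ)) * (p:ℝ)^(T:ℤ) := by
            apply mul_le_mul_of_nonneg_left _ (by positivity)
            calc ‖v i j‖ ≤ (p:ℝ)^(t i j) := ht i j
              _ ≤ (p:ℝ)^T := pow_le_pow_right₀ (le_of_lt hp1) (hTt i j)
              _ = (p:ℝ)^(T:ℤ) := by rw [zpow_natCast]
        _ = 1 := by rw [← zpow_add₀ (by positivity : (p:ℝ) ≠ 0)]; simp
    exact hle hy
  -- combine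
  obtain ⟨tc, c₂, htc⟩ := exists_pow_eq_mul hc0
  set N := T + tc with hN
  have h1' : ∀ x ∈ padicIntLattice p k, ((p:ℤ_[p])^N : ℤ_[p]) • x ∈ M := by
    intro x hx
    have : ((p:ℤ_[p])^N : ℤ_[p]) = ((p:ℤ_[p])^T * c₂) * c := by
      rw [hN, pow_add, htc]; ring
    rw [this, mul_smul]
    exact M.smul_mem _ (hc1 x hx)
  have h2' : ∀ y ∈ M, ((p:ℤ_[p])^N : ℤ_[p]) • y ∈ padicIntLattice p k := by
    intro y hy
    have : ((p:ℤ_[p])^N : ℤ_[p]) = (p:ℤ_[p])^tc * (p:ℤ_[p])^T := by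
      rw [hN, pow_add]; ring
    rw [this, mul_smul]
    exact (Lsub p k).smul_mem _ (h2 y hy)
  exact commensurable_of_pow_smul M N h1' h2'

lemma forward_dir (A : AddSubgroup (Fin k → ℚ_[p]))
    (h : AddSubgroupCommensurable A (padicIntLattice p k)) :
    ∃ M : Submodule ℤ_[p] (Fin k → ℚ_[p]),
      M.toAddSubgroup = A ∧ Nonempty (Module.Basis (Fin k) ℤ_[p] M) := by
  obtain ⟨hA, hL⟩ := h
  have hp0 : (p:ℤ_[p]) ≠ 0 := by
    exact_mod_cast Nat.cast_ne_zero.2 (Fact.out : p.Prime).ne_zero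
  set L := padicIntLattice p k with hLdef
  set m₁ := Nat.card (↥L ⧸ ((A ⊓ L).addSubgroupOf L)) with hm₁def
  set m₂ := Nat.card (↥A ⧸ ((A ⊓ L).addSubgroupOf A)) with hm₂def
  have hm₁0 : m₁ ≠ 0 := Nat.card_ne_zero.2 ⟨inferInstance, hL⟩
  have hm₂0 : m₂ ≠ 0 := Nat.card_ne_zero.2 ⟨inferInstance, hA⟩
  have hm₁ : ∀ x ∈ L, m₁ • x ∈ A ⊓ L := by
    intro x hx
    have h0 : (QuotientAddGroup.mk (m₁ • (⟨x, hx⟩ : ↥L)) :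
        ↥L ⧸ ((A ⊓ L).addSubgroupOf L)) = 0 := by
      rw [QuotientAddGroup.mk_nsmul]
      exact card_nsmul_eq_zero'
    rw [QuotientAddGroup.eq_zero_iff, AddSubgroup.mem_addSubgroupOf] at h0
    simpa using h0
  have hm₂ : ∀ x ∈ A, m₂ • x ∈ A ⊓ L := by
    intro x hx
    have h0 : (QuotientAddGroup.mk (m₂ • (⟨x, hx⟩ : ↥A)) :
        ↥A ⧸ ((A ⊓ L).addSubgroupOf A)) = 0 := by
      rw [QuotientAddGroup.mk_nsmul]
      exact card_nsmul_eq_zero'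
    rw [QuotientAddGroup.eq_zero_iff, AddSubgroup.mem_addSubgroupOf] at h0
    simpa using h0
  have hmZ : ((m₁ * m₂ : ℕ) : ℤ_[p]) ≠ 0 := Nat.cast_ne_zero.2 (mul_ne_zero hm₁0 hm₂0)
  obtain ⟨s, d, hsd⟩ := exists_pow_eq_mul hmZ
  -- A is closed under ℤ_p-scalar multiplication
  have hsmul : ∀ (z : ℤ_[p]) (x : Fin k → ℚ_[p]), x ∈ A → z • x ∈ A := by
    intro z x hx
    obtain ⟨w, hw⟩ := Ideal.mem_span_singleton'.1 (PadicInt.appr_spec s z)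
    have hz : z = ((z.appr s : ℕ) : ℤ_[p]) + ((m₁ * m₂ : ℕ) : ℤ_[p]) * (d * w) := by
      have : ((m₁ * m₂ : ℕ) : ℤ_[p]) * (d * w) = w * (p:ℤ_[p])^s := by
        rw [hsd]; ring
      rw [this, hw]; ring
    have key : z • x = ((z.appr s : ℕ) : ℤ_[p]) • x +
        (m₁:ℤ_[p]) • ((d * w) • ((m₂:ℤ_[p]) • x)) := by
      conv_lhs => rw [hz]
      rw [add_smul, ← mul_smul, ← mul_smul]
      congr 2
      push_cast
      ring
    rw [key]
    apply A.add_mem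
    · rw [Nat.cast_smul_eq_nsmul]
      exact A.nsmul_mem hx _
    · have h2 : (m₂:ℤ_[p]) • x ∈ Lsub p k := by
        rw [Nat.cast_smul_eq_nsmul]
        exact ((AddSubgroup.mem_inf).1 (hm₂ x hx)).2
      have h3 : (d * w) • ((m₂:ℤ_[p]) • x) ∈ Lsub p k := (Lsub p k).smul_mem _ h2
      have h4 := hm₁ _ h3
      rw [AddSubgroup.mem_inf] at h4
      rw [Nat.cast_smul_eq_nsmul]
      exact h4.1
  set M : Submodule ℤ_[p] (Fin k → ℚ_[p]) :=
    { carrier := A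
      add_mem' := fun ha hb => A.add_mem ha hb
      zero_mem' := A.zero_mem
      smul_mem' := fun z x hx => hsmul z x hx } with hMdef
  have hMA : M.toAddSubgroup = A := by
    ext x
    exact Iff.rfl
  have hMmem : ∀ x, x ∈ M ↔ x ∈ A := fun x => Iff.rfl
  -- M is free of rank k
  have hm₂Z : ((m₂:ℕ) : ℤ_[p]) ≠ 0 := Nat.cast_ne_zero.2 hm₂0
  obtain ⟨s₂, d₂, hs2⟩ := exists_pow_eq_mul hm₂Z
  set f := scalemap p k ((p:ℤ_[p])^s₂) with hfdef
  have hfinj : Function.Injective f := scalemap_inj (pow_ne_zero _ hp0)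
  set M' := M.map f with hM'def
  have hM'L : M' ≤ Lsub p k := by
    rintro _ ⟨a, ha, rfl⟩
    show ((p:ℤ_[p])^s₂) • a ∈ Lsub p k
    have e1 : ((p:ℤ_[p])^s₂) • a = d₂ • (((m₂:ℕ):ℤ_[p]) • a) := by
      rw [← mul_smul]
      congr 1
      rw [hs2]
      ring
    rw [e1]
    apply (Lsub p k).smul_mem
    rw [Nat.cast_smul_eq_nsmul]
    exact ((AddSubgroup.mem_inf).1 (hm₂ a ha)).2
  set e := Submodule.equivMapOfInjective f hfinj M with hedef
  obtain ⟨n, bM'⟩ := Submodule.basisOfPidOfLE hM'L (LsubBasis p k)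
  have hm₁Z : ((m₁:ℕ) : ℤ_[p]) ≠ 0 := Nat.cast_ne_zero.2 hm₁0
  set g := scalemap p k ((m₁:ℕ):ℤ_[p]) with hgdef
  have hginj : Function.Injective g := scalemap_inj hm₁Z
  set Lmap := (Lsub p k).map g with hLmapdef
  have hLmapM : Lmap ≤ M := by
    rintro _ ⟨x, hx, rfl⟩
    show ((m₁:ℕ):ℤ_[p]) • x ∈ M
    rw [hMmem, Nat.cast_smul_eq_nsmul]
    exact ((AddSubgroup.mem_inf).1 (hm₁ x hx)).1
  have r1 : Module.rank ℤ_[p] (Lsub p k) = k := by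
    rw [rank_eq_card_basis (LsubBasis p k), Fintype.card_fin]
  have r2 : Module.rank ℤ_[p] M' = n := by
    rw [rank_eq_card_basis bM', Fintype.card_fin]
  have r3 : Module.rank ℤ_[p] M = Module.rank ℤ_[p] M' := e.rank_eq
  have r4 : Module.rank ℤ_[p] Lmap = k := by
    have h7 := (Submodule.equivMapOfInjective g hginj (Lsub p k)).rank_eq
    rw [hLmapdef, ← h7, r1]
  have hnk : n = k := by
    have h5 : Module.rank ℤ_[p] M' ≤ (k:Cardinal) := r1 ▸ Submodule.rank_mono hM'L
    have h6 : (k:Cardinal) ≤ Module.rank ℤ_[p] M' := by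
      rw [← r3, ← r4]
      exact Submodule.rank_mono hLmapM
    rw [r2] at h5 h6
    exact_mod_cast le_antisymm h5 h6
  exact ⟨M, hMA, ⟨((bM'.map e.symm).reindex (finCongr hnk))⟩⟩

/-- for a prime `p`, `k ≥ 1`, and an additive subgroup `A` of `ℚ_p^k`,
`A` is commensurable with `ℤ_p^k` iff `A` underlies a `ℤ_p`-submodule of `ℚ_p^k` which is
free of rank `k` over `ℤ_p`. -/
theorem commensurable_iff_free_rank_k (p : ℕ) [Fact p.Prime] (k : ℕ) (hk : 1 ≤ k)
    (A : AddSubgroup (Fin k → ℚ_[p])) :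
    AddSubgroupCommensurable A (padicIntLattice p k) ↔
      ∃ M : Submodule ℤ_[p] (Fin k → ℚ_[p]),
        M.toAddSubgroup = A ∧ Nonempty (Module.Basis (Fin k) ℤ_[p] M) := by
  constructor
  · exact forward_dir A
  · rintro ⟨M, hMA, ⟨b⟩⟩
    rw [← hMA]
    exact backward_dir hk M b
end aux
end

section
/- Dimension is additive in exact sequences modulo divisors of q − 1: Let O be a local ring whose residue field is finite of cardinality q, let n and m be positive divisors of q − 1, and let 0 → X → Y → Z → 0 be a short exact sequence of O-modules that are finite as sets (i.e., an injective O-linear map f : X → Y and a surjective O-linear map g : Y → Z with range f = ker g). Then (|X| − 1)/n + (|Z| − 1)/n ≡ (|Y| − 1)/n (mod m), where |·| denotes the (finite) cardinality of the module and the divisions are exact natural-number divisions. -/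
open IsLocalRing

universe u

lemma card_pow_aux {O : Type*} [CommRing O] [IsLocalRing O] [Finite (ResidueField O)] :
    ∀ (k : ℕ) (M : Type u) [AddCommGroup M] [Module O M] [Finite M], Nat.card M = k →
    ∃ j, Nat.card M = Nat.card (ResidueField O) ^ j := by
  intro k
  induction k using Nat.strong_induction_on with
  | _ k ih =>
    intro M _ _ _ hk
    by_cases hs : Subsingleton M
    · refine ⟨0, ?_⟩
      rw [pow_zero, Nat.card_eq_one_iff_unique]
      exact ⟨hs, ⟨0⟩⟩
    · set I := maximalIdeal O with hI
      set N : Submodule O M := I • ⊤ with hN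
      have hne : N ≠ ⊤ := by
        intro h
        have htop : (⊤ : Submodule O M) = ⊥ := by
          refine Submodule.eq_bot_of_le_smul_of_le_jacobson_bot I ⊤
            ⟨Set.Finite.toFinset Set.finite_univ, by simp⟩ (le_of_eq h.symm)
            (IsLocalRing.maximalIdeal_le_jacobson ⊥)
        refine hs ⟨fun a b => ?_⟩
        have ha : a ∈ (⊤ : Submodule O M) := trivial
        have hb : b ∈ (⊤ : Submodule O M) := trivial
        rw [htop, Submodule.mem_bot] at ha hb
        rw [ha, hb]
      letI : Module (ResidueField O) (M ⧸ N) :=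
        show Module (O ⧸ I) (M ⧸ I • (⊤ : Submodule O M)) from inferInstance
      have hcard : Nat.card M = Nat.card (M ⧸ N) * Nat.card N :=
        AddSubgroup.card_eq_card_quotient_mul_card_addSubgroup N.toAddSubgroup
      haveI : Finite (M ⧸ N) := Quotient.finite _
      haveI : Fintype (M ⧸ N) := Fintype.ofFinite _
      haveI : Fintype (ResidueField O) := Fintype.ofFinite _
      have hq : Nat.card (M ⧸ N) = Nat.card (ResidueField O) ^
          Module.finrank (ResidueField O) (M ⧸ N) := by
        rw [Nat.card_eq_fintype_card, Nat.card_eq_fintype_card]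
        exact Module.card_eq_pow_finrank
      haveI : Fintype M := Fintype.ofFinite _
      obtain ⟨x, hx⟩ : ∃ x : M, x ∉ N := by
        by_contra h
        push_neg at h
        exact hne (Submodule.eq_top_iff'.mpr h)
      have hlt : Nat.card N < Nat.card M := by
        classical
        rw [Nat.card_eq_fintype_card, Nat.card_eq_fintype_card]
        exact Fintype.card_subtype_lt hx
      obtain ⟨j, hj⟩ := ih (Nat.card N) (hk ▸ hlt) N rfl
      exact ⟨Module.finrank (ResidueField O) (M ⧸ N) + j, by rw [hcard, hq, hj, pow_add]⟩

lemma card_pow_of_finite {O : Type*} [CommRing O] [IsLocalRing O] [Finite (ResidueField O)]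
    (M : Type u) [AddCommGroup M] [Module O M] [Finite M] :
    ∃ j, Nat.card M = Nat.card (ResidueField O) ^ j :=
  card_pow_aux (Nat.card M) M rfl

/-- dimension is additive in exact sequences modulo divisors of `q - 1`:
let `O` be a local ring whose residue field is finite of cardinality `q`, let `n`, `m` be
positive divisors of `q - 1`, and let `0 → X → Y → Z → 0` be a short exact sequence of
`O`-modules that are finite as sets (an injective `O`-linear `f : X → Y` and a surjective
`O`-linear `g : Y → Z` with `range f = ker g`). Then
`(|X| - 1)/n + (|Z| - 1)/n ≡ (|Y| - 1)/n (mod m)`. -/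
theorem dim_additive_in_exact_sequences {O : Type*} [CommRing O] [IsLocalRing O]
    [Fintype (IsLocalRing.ResidueField O)] (q : ℕ)
    (hq : Fintype.card (IsLocalRing.ResidueField O) = q)
    (n m : ℕ) (hn : 0 < n) (hndvd : n ∣ q - 1) (hm : 0 < m) (hmdvd : m ∣ q - 1)
    (X Y Z : Type*) [AddCommGroup X] [Module O X] [Fintype X]
    [AddCommGroup Y] [Module O Y] [Fintype Y]
    [AddCommGroup Z] [Module O Z] [Fintype Z]
    (f : X →ₗ[O] Y) (hf : Function.Injective f)
    (g : Y →ₗ[O] Z) (hg : Function.Surjective g)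
    (hfg : LinearMap.range f = LinearMap.ker g) :
    (Fintype.card X - 1) / n + (Fintype.card Z - 1) / n ≡
      (Fintype.card Y - 1) / n [MOD m] := by
  have hqcard : Nat.card (ResidueField O) = q := by rw [Nat.card_eq_fintype_card, hq]
  -- multiplicativity of cardinality
  have hmul : Fintype.card Y = Fintype.card X * Fintype.card Z := by
    have h1 : Nat.card X = Nat.card (LinearMap.ker g) := by
      rw [← hfg]
      exact Nat.card_congr (LinearEquiv.ofInjective f hf).toEquiv
    have h2 : Nat.card (Y ⧸ LinearMap.ker g) = Nat.card Z :=
      Nat.card_congr (LinearMap.quotKerEquivOfSurjective g hg).toEquiv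
    have h3 : Nat.card Y = Nat.card (Y ⧸ LinearMap.ker g) * Nat.card (LinearMap.ker g) :=
      AddSubgroup.card_eq_card_quotient_mul_card_addSubgroup (LinearMap.ker g).toAddSubgroup
    have := h3
    rw [h2, ← h1] at this
    simpa [Nat.card_eq_fintype_card, mul_comm] using this
  -- cardinalities are powers of q
  obtain ⟨jx, hjx⟩ := card_pow_of_finite (O := O) X
  obtain ⟨jz, hjz⟩ := card_pow_of_finite (O := O) Z
  rw [hqcard, Nat.card_eq_fintype_card] at hjx hjz
  have hdvdX : q - 1 ∣ Fintype.card X - 1 := by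
    rw [hjx]; simpa using Nat.sub_dvd_pow_sub_pow q 1 jx
  have hdvdZ : q - 1 ∣ Fintype.card Z - 1 := by
    rw [hjz]; simpa using Nat.sub_dvd_pow_sub_pow q 1 jz
  set a := Fintype.card X
  set c := Fintype.card Z
  have ha1 : 1 ≤ a := Fintype.card_pos
  have hc1 : 1 ≤ c := Fintype.card_pos
  obtain ⟨A, hA⟩ : n ∣ a - 1 := hndvd.trans hdvdX
  obtain ⟨C, hC⟩ : n ∣ c - 1 := hndvd.trans hdvdZ
  have hDm : m ∣ c - 1 := hmdvd.trans hdvdZ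
  rw [hmul]
  have e1 : (a - 1) / n = A := by rw [hA, Nat.mul_div_cancel_left _ hn]
  have e2 : (c - 1) / n = C := by rw [hC, Nat.mul_div_cancel_left _ hn]
  have key : a * c - 1 = n * (A * c + C) := by
    have h1 : a = n * A + 1 := by omega
    have h2 : c = n * C + 1 := by omega
    have e : a * c = n * (A * c + C) + 1 := by calc a * c = (n*A+1)*(n*C+1) := by rw [← h1, ← h2]
        _ = n * (A * (n*C+1) + C) + 1 := by ring
        _ = n * (A * c + C) + 1 := by rw [← h2]
    omega
  have e3 : (a * c - 1) / n = A * c + C := by rw [key, Nat.mul_div_cancel_left _ hn]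
  rw [e1, e2, e3]
  have hc : (1 : ℕ) ≡ c [MOD m] := (Nat.modEq_iff_dvd' hc1).mpr hDm
  simpa using (Nat.ModEq.mul_left A hc).add_right C
end
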